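/- arXiv:2506.19809 — 5 statements merged into one kernel-verified Lean document; each statement's English description precedes it below -/
import Mathlib

section
/- Let Ω be a Hermitian operator on a finite-dimensional Hilbert space H with 0 ≤ Ω ≤ 1, and let |Ψ⟩ be a unit vector with Ω|Ψ⟩ = |Ψ⟩. Let β(Ω) denote the second largest eigenvalue of Ω (equivalently, the operator norm of Ω − |Ψ⟩⟨Ψ|). Then for every density operator ρ on H with ⟨Ψ|ρ|Ψ⟩ ≤ 1 − ε (0 ≤ ε ≤ 1), we have tr(Ωρ) ≤ 1 − (1 − β(Ω))ε. -/
open scoped Matrix.Norms.L2Operator ComplexOrder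
open Matrix

section Aux
variable {n : ℕ}

private lemma trace_nonneg_of_psd' {M : Matrix (Fin n) (Fin n) ℂ} (hM : M.PosSemidef) :
    0 ≤ M.trace := by
  rw [Matrix.trace]
  apply Finset.sum_nonneg
  intro i _
  have := hM.dotProduct_mulVec_nonneg (Pi.single i 1)
  simpa [dotProduct, Matrix.mulVec, Pi.single_apply] using this

private lemma trace_mul_nonneg' {A B : Matrix (Fin n) (Fin n) ℂ}
    (hA : A.PosSemidef) (hB : B.PosSemidef) : 0 ≤ (A * B).trace := by
  obtain ⟨C, rfl⟩ := (by open scoped MatrixOrder in exact CStarAlgebra.nonneg_iff_eq_star_mul_self.mp hA.nonneg)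
  rw [Matrix.mul_assoc, Matrix.trace_mul_comm]
  exact trace_nonneg_of_psd' (hB.mul_mul_conjTranspose_same C)

private lemma trace_vmv' (Ψ : Fin n → ℂ) (ρ : Matrix (Fin n) (Fin n) ℂ) :
    (vecMulVec Ψ (star Ψ) * ρ).trace = star Ψ ⬝ᵥ ρ *ᵥ Ψ := by
  simp [Matrix.trace, Matrix.mul_apply, dotProduct, Matrix.mulVec, vecMulVec_apply,
    Matrix.diag]
  rw [Finset.sum_comm]
  refine Finset.sum_congr rfl fun i _ => ?_
  rw [Finset.mul_sum]
  exact Finset.sum_congr rfl fun j _ => by ring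

private lemma herm_quad_real' (M : Matrix (Fin n) (Fin n) ℂ) (hM : M.IsHermitian)
    (x : Fin n → ℂ) : star (star x ⬝ᵥ M *ᵥ x) = star x ⬝ᵥ M *ᵥ x := by
  rw [← Matrix.star_dotProduct, Matrix.star_mulVec, hM.eq, ← Matrix.dotProduct_mulVec]

private lemma vmv_mulVec' (Ψ x : Fin n → ℂ) :
    (vecMulVec Ψ (star Ψ)) *ᵥ x = (star Ψ ⬝ᵥ x) • Ψ := by
  ext i
  simp only [Matrix.mulVec, dotProduct, vecMulVec_apply, Pi.smul_apply, smul_eq_mul,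
    Finset.sum_mul, of_apply, Finset.mul_sum]
  exact Finset.sum_congr rfl fun j _ => by ring

private lemma vmv_herm' (Ψ : Fin n → ℂ) :
    (vecMulVec Ψ (star Ψ))ᴴ = vecMulVec Ψ (star Ψ) := by
  ext i j; simp [vecMulVec_apply, conjTranspose_apply, mul_comm]

private lemma key' (A : Matrix (Fin n) (Fin n) ℂ) (Ψ : Fin n → ℂ) (hA : A.IsHermitian)
    (hΨ : star Ψ ⬝ᵥ Ψ = 1) (hAΨ : A *ᵥ Ψ = 0) :
    ((‖A‖ : ℂ) • ((1 : Matrix (Fin n) (Fin n) ℂ) - vecMulVec Ψ (star Ψ)) - A).PosSemidef := by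
  set P := vecMulVec Ψ (star Ψ) with hP
  set β : ℝ := ‖A‖ with hβ
  have hPH : Pᴴ = P := vmv_herm' Ψ
  have hMH : ((β : ℂ) • ((1 : Matrix (Fin n) (Fin n) ℂ) - P) - A).IsHermitian := by
    unfold Matrix.IsHermitian
    rw [conjTranspose_sub, conjTranspose_smul, conjTranspose_sub, conjTranspose_one,
      hPH, hA.eq, Complex.star_def, Complex.conj_ofReal]
  refine PosSemidef.of_dotProduct_mulVec_nonneg hMH fun x => ?_
  set c : ℂ := star Ψ ⬝ᵥ x with hc
  set y : Fin n → ℂ := x - c • Ψ with hy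
  have h1 : star Ψ ⬝ᵥ y = 0 := by
    rw [hy, dotProduct_sub, dotProduct_smul, hΨ, hc]; simp
  have h3 : A *ᵥ x = A *ᵥ y := by
    rw [hy, Matrix.mulVec_sub, Matrix.mulVec_smul, hAΨ]; simp
  have h4 : star Ψ ᵥ* A = 0 := by
    have := congrArg star hAΨ
    rwa [Matrix.star_mulVec, hA.eq, star_zero] at this
  have hxsplit : star x = star y + star c • star Ψ := by
    rw [hy]; ext i; simp [mul_comm]
  have h5 : star x ⬝ᵥ A *ᵥ x = star y ⬝ᵥ A *ᵥ y := by
    rw [h3, hxsplit, add_dotProduct, smul_dotProduct]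
    rw [Matrix.dotProduct_mulVec (star Ψ), h4]
    simp
  have h6 : star x ⬝ᵥ ((1 - P) *ᵥ x) = star y ⬝ᵥ y := by
    have : (1 - P) *ᵥ x = y := by
      rw [Matrix.sub_mulVec, Matrix.one_mulVec, hP, vmv_mulVec', ← hc, hy]
    rw [this, hxsplit, add_dotProduct, smul_dotProduct, h1]
    simp
  have hform : star x ⬝ᵥ (((β : ℂ) • ((1 : Matrix (Fin n) (Fin n) ℂ) - P) - A) *ᵥ x)
      = (β : ℂ) * (star y ⬝ᵥ y) - star y ⬝ᵥ A *ᵥ y := by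
    rw [Matrix.sub_mulVec, dotProduct_sub, Matrix.smul_mulVec, dotProduct_smul,
      h5, h6, smul_eq_mul]
  rw [hform]
  set y' : EuclideanSpace ℂ (Fin n) := (WithLp.equiv 2 _).symm y with hy'
  have hinner : (inner ℂ y' ((WithLp.equiv 2 _).symm (A *ᵥ y)) : ℂ) = star y ⬝ᵥ A *ᵥ y :=
    (EuclideanSpace.inner_toLp_toLp _ _).trans (dotProduct_comm _ _)
  have hyy : (inner ℂ y' y' : ℂ) = star y ⬝ᵥ y := (EuclideanSpace.inner_toLp_toLp _ _).trans (dotProduct_comm _ _)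
  have hnn : (star y ⬝ᵥ y) = ((‖y'‖ ^ 2 : ℝ) : ℂ) := by
    rw [← hyy, inner_self_eq_norm_sq_to_K]
    norm_cast
  have hre : (star y ⬝ᵥ A *ᵥ y).re ≤ β * ‖y'‖ ^ 2 := by
    calc (star y ⬝ᵥ A *ᵥ y).re ≤ ‖star y ⬝ᵥ A *ᵥ y‖ := Complex.re_le_norm _
      _ = ‖(inner ℂ y' ((WithLp.equiv 2 _).symm (A *ᵥ y)) : ℂ)‖ := by
          rw [hinner]
      _ ≤ ‖y'‖ * ‖(WithLp.equiv 2 (Fin n → ℂ)).symm (A *ᵥ y)‖ := norm_inner_le_norm _ _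
      _ ≤ ‖y'‖ * (β * ‖y'‖) := by
          have := A.l2_opNorm_mulVec y'
          exact mul_le_mul_of_nonneg_left this (norm_nonneg _)
      _ = β * ‖y'‖ ^ 2 := by ring
  have him : ((β : ℂ) * (star y ⬝ᵥ y) - star y ⬝ᵥ A *ᵥ y).im = 0 := by
    have h7 := herm_quad_real' A hA y
    have : (star y ⬝ᵥ A *ᵥ y).im = 0 := by
      have := congrArg Complex.im h7
      simp only [Complex.star_def, Complex.conj_im] at this
      linarith
    rw [hnn, ← Complex.ofReal_mul]
    simp only [Complex.sub_im, Complex.ofReal_im, this, sub_zero, zero_sub, neg_zero]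
  rw [Complex.le_def]
  constructor
  · simp only [Complex.zero_re, Complex.sub_re, Complex.mul_re, Complex.ofReal_re,
      Complex.ofReal_im]
    rw [hnn] at *
    simp only [Complex.ofReal_re, Complex.ofReal_im]
    nlinarith [hre]
  · rw [him]; simp

end Aux

/-- If `Ω` is a Hermitian operator with `0 ≤ Ω ≤ 1` fixing the unit vector `Ψ`, and
`β = ‖Ω − |Ψ⟩⟨Ψ|‖` is its second largest eigenvalue, then every density operator `ρ`
with `⟨Ψ|ρ|Ψ⟩ ≤ 1 − ε` satisfies `tr(Ωρ) ≤ 1 − (1 − β)ε`. -/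
theorem stmt0 {N : ℕ} (Ω ρ : Matrix (Fin N) (Fin N) ℂ) (Ψ : Fin N → ℂ) (ε : ℝ)
    (hΩherm : Ω.IsHermitian) (hΩpos : Ω.PosSemidef) (hΩle : (1 - Ω).PosSemidef)
    (hΨunit : dotProduct (star Ψ) Ψ = 1)
    (hfix : Ω.mulVec Ψ = Ψ)
    (hρpos : ρ.PosSemidef) (hρtr : ρ.trace = 1)
    (hε0 : 0 ≤ ε) (hε1 : ε ≤ 1)
    (hfid : (dotProduct (star Ψ) (ρ.mulVec Ψ)).re ≤ 1 - ε) :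
    ((Ω * ρ).trace).re ≤ 1 - (1 - ‖Ω - Matrix.vecMulVec Ψ (star Ψ)‖) * ε := by
  set P := vecMulVec Ψ (star Ψ) with hPdef
  set A := Ω - P with hAdef
  set β : ℝ := ‖A‖ with hβdef
  have hβ0 : 0 ≤ β := norm_nonneg _
  have hPH : Pᴴ = P := vmv_herm' Ψ
  have hPΨ : P *ᵥ Ψ = Ψ := by rw [hPdef, vmv_mulVec', hΨunit, one_smul]
  have hAΨ : A *ᵥ Ψ = 0 := by
    rw [hAdef, Matrix.sub_mulVec, hfix, hPΨ, sub_self]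
  have hAH : A.IsHermitian := by
    unfold Matrix.IsHermitian
    rw [hAdef, conjTranspose_sub, hΩherm.eq, hPH]
  -- the key positivity
  have hkey := key' A Ψ hAH hΨunit hAΨ
  have htr1 : 0 ≤ ((((β : ℂ) • ((1 : Matrix (Fin N) (Fin N) ℂ) - P) - A) * ρ).trace) :=
    trace_mul_nonneg' hkey hρpos
  -- trace identities
  have hF : (P * ρ).trace = star Ψ ⬝ᵥ ρ *ᵥ Ψ := trace_vmv' Ψ ρ
  set F : ℝ := ((P * ρ).trace).re with hFdef
  have hFle : F ≤ 1 - ε := by rw [hFdef, hF]; exact hfid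
  set T : ℝ := ((Ω * ρ).trace).re with hTdef
  have hexpand : ((((β : ℂ) • ((1 : Matrix (Fin N) (Fin N) ℂ) - P) - A) * ρ).trace)
      = (β : ℂ) * (ρ.trace - (P * ρ).trace) - ((Ω * ρ).trace - (P * ρ).trace) := by
    rw [hAdef, Matrix.sub_mul, Matrix.sub_mul, Matrix.smul_mul, Matrix.sub_mul,
      Matrix.one_mul, trace_sub, trace_smul, trace_sub, trace_sub]
    simp only [smul_eq_mul]
    try ring
  rw [hexpand] at htr1
  have htr1re : 0 ≤ β * (1 - F) - (T - F) := by
    have := (Complex.le_def.mp htr1).1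
    simp only [Complex.zero_re, Complex.sub_re, Complex.mul_re, Complex.ofReal_re,
      Complex.ofReal_im, hρtr, Complex.one_re, zero_mul, sub_zero] at this
    convert this using 2 <;> simp [hρtr, hTdef, hFdef]
  -- bound T ≤ 1
  have hT1 : T ≤ 1 := by
    have h0 := trace_mul_nonneg' hΩle hρpos
    have : ((1 : Matrix (Fin N) (Fin N) ℂ) - Ω) * ρ = ρ - Ω * ρ := by
      rw [Matrix.sub_mul, Matrix.one_mul]
    rw [this, trace_sub, hρtr] at h0
    have := (Complex.le_def.mp h0).1
    simp only [Complex.zero_re, Complex.sub_re, Complex.one_re] at this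
    linarith
  by_cases hβ1 : β ≤ 1
  · nlinarith [mul_nonneg (sub_nonneg.mpr hβ1) (sub_nonneg.mpr hFle)]
  · push_neg at hβ1
    nlinarith
end

section
/- With the same setup, the bound is tight: there exists a density operator ρ with ⟨Ψ|ρ|Ψ⟩ = 1 − ε achieving tr(Ωρ) = 1 − (1 − β(Ω))ε, provided β(Ω) is attained by an eigenvector orthogonal to |Ψ⟩. Hence max_{⟨Ψ|ρ|Ψ⟩ ≤ 1−ε} tr(Ωρ) = 1 − ν(Ω)ε. -/
open scoped Matrix.Norms.L2Operator ComplexOrder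
open Matrix

private lemma vmv_mulVec {N : ℕ} (w x : Fin N → ℂ) :
    (Matrix.vecMulVec w (star x)).mulVec = fun y => (dotProduct (star x) y) • w := by
  funext y i
  simp [Matrix.mulVec, Matrix.vecMulVec, dotProduct, Finset.mul_sum, mul_comm,
    mul_left_comm]

private lemma vmv_trace {N : ℕ} (w x : Fin N → ℂ) :
    (Matrix.vecMulVec w (star x)).trace = dotProduct (star x) w := by
  simp [Matrix.trace, Matrix.diag, Matrix.vecMulVec, dotProduct, mul_comm]

private lemma mul_vmv {N : ℕ} (Ω : Matrix (Fin N) (Fin N) ℂ) (w x : Fin N → ℂ) :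
    Ω * Matrix.vecMulVec w x = Matrix.vecMulVec (Ω.mulVec w) x := by
  ext i j
  simp [Matrix.mul_apply, Matrix.vecMulVec, Matrix.mulVec, dotProduct,
    Finset.sum_mul, mul_assoc]

private lemma vmv_psd {N : ℕ} (a : ℝ) (ha : 0 ≤ a) (w : Fin N → ℂ) :
    ((a : ℂ) • Matrix.vecMulVec w (star w)).PosSemidef := by
  refine Matrix.posSemidef_iff_dotProduct_mulVec.mpr ⟨?_, ?_⟩
  · unfold Matrix.IsHermitian
    ext i j
    simp [Matrix.conjTranspose_apply, Matrix.vecMulVec, mul_comm]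
  · intro x
    have h1 : ((a : ℂ) • Matrix.vecMulVec w (star w)).mulVec x
        = (a : ℂ) • ((dotProduct (star w) x) • w) := by
      rw [Matrix.smul_mulVec, vmv_mulVec]
    rw [h1]
    have h2 : dotProduct (star x) ((a : ℂ) • ((dotProduct (star w) x) • w))
        = (a : ℂ) * (dotProduct (star w) x * dotProduct (star x) w) := by
      simp [dotProduct_smul, mul_assoc]
    rw [h2]
    have h3 : dotProduct (star x) w = star (dotProduct (star w) x) := by
      simp [dotProduct, Finset.sum_comm, mul_comm]
    rw [h3]
    exact mul_nonneg (by exact_mod_cast Complex.zero_le_real.2 ha) (mul_star_self_nonneg _)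

/-- Tightness of the verification bound: if the second largest eigenvalue
`β = ‖Ω − |Ψ⟩⟨Ψ|‖` is attained by an eigenvector orthogonal to `Ψ`, then for every
`ε ∈ [0,1]` there is a density operator `ρ` with `⟨Ψ|ρ|Ψ⟩ = 1 − ε` and
`tr(Ωρ) = 1 − (1 − β)ε`. -/
theorem stmt1 {N : ℕ} (hN : 2 ≤ N) (Ω : Matrix (Fin N) (Fin N) ℂ) (Ψ : Fin N → ℂ) (ε : ℝ)
    (hΩherm : Ω.IsHermitian) (hΩpos : Ω.PosSemidef) (hΩle : (1 - Ω).PosSemidef)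
    (hΨunit : dotProduct (star Ψ) Ψ = 1)
    (hfix : Ω.mulVec Ψ = Ψ)
    (hε0 : 0 ≤ ε) (hε1 : ε ≤ 1)
    (hattained : ∃ v : Fin N → ℂ, v ≠ 0 ∧ dotProduct (star Ψ) v = 0 ∧
      Ω.mulVec v = ((‖Ω - Matrix.vecMulVec Ψ (star Ψ)‖ : ℝ) : ℂ) • v) :
    ∃ ρ : Matrix (Fin N) (Fin N) ℂ, ρ.PosSemidef ∧ ρ.trace = 1 ∧
      (dotProduct (star Ψ) (ρ.mulVec Ψ)).re = 1 - ε ∧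
      ((Ω * ρ).trace).re = 1 - (1 - ‖Ω - Matrix.vecMulVec Ψ (star Ψ)‖) * ε := by
  obtain ⟨v, hv0, hvperp, hveig⟩ := hattained
  set β : ℝ := ‖Ω - Matrix.vecMulVec Ψ (star Ψ)‖ with hβ
  set c : ℝ := ∑ i, Complex.normSq (v i) with hc
  have hcv : dotProduct (star v) v = (c : ℂ) := by
    simp [dotProduct, hc, Complex.normSq_eq_conj_mul_self]
  have hcpos : 0 < c := by
    rcases Function.ne_iff.mp hv0 with ⟨i, hi⟩
    refine Finset.sum_pos' (fun j _ => Complex.normSq_nonneg _) ⟨i, Finset.mem_univ i, ?_⟩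
    simpa [Complex.normSq_pos] using hi
  refine ⟨((1 - ε : ℝ) : ℂ) • Matrix.vecMulVec Ψ (star Ψ)
      + ((ε / c : ℝ) : ℂ) • Matrix.vecMulVec v (star v), ?_, ?_, ?_, ?_⟩
  · exact (vmv_psd (1 - ε) (by linarith) Ψ).add
      (vmv_psd (ε / c) (div_nonneg hε0 hcpos.le) v)
  · rw [Matrix.trace_add, Matrix.trace_smul, Matrix.trace_smul, vmv_trace, vmv_trace,
      hΨunit, hcv]
    push_cast
    have hc0 : (c : ℂ) ≠ 0 := by exact_mod_cast hcpos.ne'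
    rw [smul_eq_mul, smul_eq_mul]
    field_simp
    ring
  · have hperp' : dotProduct (star v) Ψ = 0 := by
      have h := congrArg star hvperp
      simpa [dotProduct, mul_comm] using h
    rw [Matrix.add_mulVec, Matrix.smul_mulVec, Matrix.smul_mulVec,
      vmv_mulVec, vmv_mulVec]
    simp [dotProduct_smul, hΨunit, hperp', smul_smul]
  · rw [Matrix.mul_add, Matrix.mul_smul, Matrix.mul_smul, mul_vmv, mul_vmv, hfix, hveig,
      Matrix.trace_add, Matrix.trace_smul, Matrix.trace_smul, vmv_trace, vmv_trace,
      hΨunit, dotProduct_smul, hcv]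
    have : (((1 - ε : ℝ) : ℂ) • (1 : ℂ) + ((ε / c : ℝ) : ℂ) • ((β : ℂ) • (c : ℂ))).re
        = (1 - ε) + (ε / c) * (β * c) := by
      simp [Complex.ext_iff, smul_eq_mul, mul_assoc]
    rw [this]
    field_simp
    ring
end

section
/- With the notation of the previous statement, define P₀ = ∑_{i: s_i>0} |a_i⟩⟨a_i| ⊗ |B_i⟩⟨B_i| and P₁ = ∑_{i∈Z_d} |ã_i⟩⟨ã_i| ⊗ |B̃_i⟩⟨B̃_i|. Then P₀ and P₁ are orthogonal projectors, P₀|Ψ⟩ = |Ψ⟩, P₁|Ψ⟩ = |Ψ⟩, and tr(P₀P₁) = 1. -/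
open Matrix

/-- The tensor product of two vectors. -/
def tensVec {d : ℕ} {ι : Type*} (u : Fin d → ℂ) (v : ι → ℂ) : Fin d × ι → ℂ :=
  fun p => u p.1 * v p.2

section helpers
variable {n : Type*} [Fintype n]

lemma myVecMulVec_mul (u v w x : n → ℂ) :
    vecMulVec u v * vecMulVec w x = (v ⬝ᵥ w) • vecMulVec u x := by
  ext i j
  simp only [Matrix.mul_apply, vecMulVec_apply, Matrix.smul_apply, dotProduct,
    smul_eq_mul, Finset.sum_mul]
  exact Finset.sum_congr rfl fun k _ => by ring

lemma myVecMulVec_mulVec (u v w : n → ℂ) :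
    (vecMulVec u v).mulVec w = (v ⬝ᵥ w) • u := by
  funext i
  simp only [mulVec, dotProduct, vecMulVec_apply, Pi.smul_apply, smul_eq_mul]
  rw [Finset.sum_mul]
  exact Finset.sum_congr rfl fun k _ => by ring

lemma myTrace_vecMulVec (u v : n → ℂ) :
    (vecMulVec u v).trace = v ⬝ᵥ u := by
  simp only [Matrix.trace, Matrix.diag, vecMulVec_apply, dotProduct]
  exact Finset.sum_congr rfl fun k _ => by ring

lemma myHerm_vecMulVec (u : n → ℂ) :
    (vecMulVec u (star u)).IsHermitian := by
  ext i j
  simp [conjTranspose_apply, vecMulVec_apply, mul_comm]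

lemma mySum_mulVec {κ : Type*} [Fintype κ] (T : Finset κ)
    (A : κ → Matrix n n ℂ) (x : n → ℂ) :
    (∑ i ∈ T, A i).mulVec x = ∑ i ∈ T, (A i).mulVec x := by
  funext j
  simp only [mulVec, dotProduct, Finset.sum_apply, Matrix.sum_apply, Finset.sum_mul]
  exact Finset.sum_comm

lemma dot_expand {d : ℕ} (f g : Fin d → ℂ) (w : Fin d → n → ℂ)
    (hON : ∀ i j, star (w i) ⬝ᵥ w j = if i = j then 1 else 0) :
    (star (fun x => ∑ j, f j * w j x) : n → ℂ) ⬝ᵥ (fun x => ∑ j, g j * w j x)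
      = ∑ j, star (f j) * g j := by
  calc (star (fun x => ∑ j, f j * w j x) : n → ℂ) ⬝ᵥ (fun x => ∑ j, g j * w j x)
      = ∑ x, ∑ j, ∑ l, (star (f j) * g l) * (star (w j x) * w l x) := by
        refine Finset.sum_congr rfl fun x _ => ?_
        simp only [Pi.star_apply, star_sum, star_mul', Finset.sum_mul_sum]
        refine Finset.sum_congr rfl fun j _ => Finset.sum_congr rfl fun l _ => by ring
    _ = ∑ j, ∑ l, (star (f j) * g l) * (star (w j) ⬝ᵥ w l) := by
        rw [Finset.sum_comm]
        refine Finset.sum_congr rfl fun j _ => ?_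
        rw [Finset.sum_comm]
        refine Finset.sum_congr rfl fun l _ => ?_
        rw [dotProduct, Finset.mul_sum]
        rfl
    _ = ∑ j, star (f j) * g j := by
        simp only [hON, mul_ite, mul_one, mul_zero, Finset.sum_ite_eq, Finset.mem_univ, if_true]

lemma dot_expand_right {d : ℕ} (f : Fin d → ℂ) (w : Fin d → n → ℂ)
    (hON : ∀ i j, star (w i) ⬝ᵥ w j = if i = j then 1 else 0) (i0 : Fin d) :
    (star (fun x => ∑ j, f j * w j x) : n → ℂ) ⬝ᵥ w i0 = star (f i0) := by
  have h : (w i0 : n → ℂ) = fun x => ∑ j, (if j = i0 then (1:ℂ) else 0) * w j x := by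
    funext x; simp
  rw [h, dot_expand f _ w hON]
  simp

lemma dot_expand_left {d : ℕ} (g : Fin d → ℂ) (w : Fin d → n → ℂ)
    (hON : ∀ i j, star (w i) ⬝ᵥ w j = if i = j then 1 else 0) (i0 : Fin d) :
    (star (w i0) : n → ℂ) ⬝ᵥ (fun x => ∑ j, g j * w j x) = g i0 := by
  have h : (w i0 : n → ℂ) = fun x => ∑ j, (if j = i0 then (1:ℂ) else 0) * w j x := by
    funext x; simp
  rw [h, dot_expand _ g w hON]
  simp

lemma dot_sum_right {d : ℕ} (x : n → ℂ) (g : Fin d → ℂ) (w : Fin d → n → ℂ) :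
    x ⬝ᵥ (fun p => ∑ i, g i * w i p) = ∑ i, g i * (x ⬝ᵥ w i) := by
  simp only [dotProduct, Finset.mul_sum]
  rw [Finset.sum_comm]
  exact Finset.sum_congr rfl fun i _ => Finset.sum_congr rfl fun p _ => by ring

lemma dot_tens {d : ℕ} {ι : Type*} [Fintype ι] (p p' : Fin d → ℂ) (q q' : ι → ℂ) :
    star (tensVec p q) ⬝ᵥ tensVec p' q' = (star p ⬝ᵥ p') * (star q ⬝ᵥ q') := by
  simp only [dotProduct, tensVec, Pi.star_apply, star_mul', Fintype.sum_prod_type,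
    Finset.sum_mul_sum]
  refine Finset.sum_congr rfl fun x _ => Finset.sum_congr rfl fun y _ => by ring

lemma proj_sum_mul {κ : Type*} [Fintype κ] [DecidableEq κ] (T : Finset κ)
    (w : κ → n → ℂ) (hON : ∀ i ∈ T, ∀ j ∈ T, star (w i) ⬝ᵥ w j = if i = j then 1 else 0) :
    (∑ i ∈ T, vecMulVec (w i) (star (w i))) * (∑ i ∈ T, vecMulVec (w i) (star (w i)))
      = ∑ i ∈ T, vecMulVec (w i) (star (w i)) := by
  rw [Finset.sum_mul_sum]
  refine Finset.sum_congr rfl fun i hi => ?_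
  rw [Finset.sum_eq_single i]
  · rw [myVecMulVec_mul, hON i hi i hi]
    simp
  · intro j hj hne
    rw [myVecMulVec_mul, hON i hi j hj, if_neg (Ne.symm hne)]
    simp
  · intro h; exact absurd hi h

lemma proj_sum_herm {κ : Type*} [Fintype κ] (T : Finset κ) (w : κ → n → ℂ) :
    (∑ i ∈ T, vecMulVec (w i) (star (w i))).IsHermitian := by
  unfold Matrix.IsHermitian
  rw [Matrix.conjTranspose_sum]
  exact Finset.sum_congr rfl fun i _ => myHerm_vecMulVec (w i)

lemma fourier_sum {d : ℕ} (hd : 0 < d) (ω : ℂ)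
    (hω : ω = Complex.exp (2 * Real.pi * Complex.I / d)) (i k : Fin d) :
    ∑ j : Fin d, (star ω) ^ ((i : ℕ) * (j : ℕ)) * ω ^ ((k : ℕ) * (j : ℕ))
      = if i = k then (d : ℂ) else 0 := by
  have hprim : IsPrimitiveRoot ω d := by
    rw [hω]; exact Complex.isPrimitiveRoot_exp d hd.ne'
  have hωd : ω ^ d = 1 := hprim.pow_eq_one
  have hωne : ω ≠ 0 := by rw [hω]; exact Complex.exp_ne_zero _
  have hstar : star ω = ω⁻¹ := by
    rw [hω, ← Complex.exp_neg]
    rw [show (star (Complex.exp (2 * Real.pi * Complex.I / d)) : ℂ)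
        = (starRingEnd ℂ) (Complex.exp (2 * Real.pi * Complex.I / d)) from rfl]
    rw [← Complex.exp_conj]
    congr 1
    simp [map_div₀, Complex.conj_I, map_ofNat]
    ring
  set ζ : ℂ := (star ω) ^ (i : ℕ) * ω ^ (k : ℕ) with hζ
  have hterm : ∀ j : Fin d, (star ω) ^ ((i : ℕ) * (j : ℕ)) * ω ^ ((k : ℕ) * (j : ℕ))
      = ζ ^ (j : ℕ) := by
    intro j
    rw [hζ, mul_pow, pow_mul, pow_mul]
  rw [Finset.sum_congr rfl fun j _ => hterm j]
  rw [Fin.sum_univ_eq_sum_range (fun j => ζ ^ j) d]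
  by_cases h : i = k
  · subst h
    have : ζ = 1 := by
      rw [hζ, hstar, inv_pow, inv_mul_cancel₀ (pow_ne_zero _ hωne)]
    simp [this]
  · have hζd : ζ ^ d = 1 := by
      rw [hζ, mul_pow, ← pow_mul, ← pow_mul, mul_comm (i:ℕ) d, mul_comm (k:ℕ) d,
        pow_mul, pow_mul, ← star_pow, hωd]
      simp
    have hζ1 : ζ ≠ 1 := by
      intro hone
      apply h
      have : ω ^ (k : ℕ) = ω ^ (i : ℕ) := by
        have := hone
        rw [hζ, hstar, inv_pow] at this
        field_simp at this
        rw [this]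
      exact Fin.ext ((hprim.pow_inj k.isLt i.isLt this).symm)
    rw [geom_sum_eq hζ1, hζd]
    simp [h]
end helpers

/-- The two test projectors `P₀ = ∑_{s_i>0} |a_i⟩⟨a_i|⊗|B_i⟩⟨B_i|` and
`P₁ = ∑_i |ã_i⟩⟨ã_i|⊗|B̃_i⟩⟨B̃_i|` of the bipartite SD protocol are orthogonal
projectors fixing `|Ψ⟩`, and `tr(P₀P₁) = 1`. -/
theorem stmt6 (d : ℕ) (hd : 0 < d) {ι : Type*} [Fintype ι] [DecidableEq ι]
    (s : Fin d → ℝ) (a : Fin d → Fin d → ℂ) (B : Fin d → ι → ℂ)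
    (hs0 : ∀ i, 0 ≤ s i) (hs1 : ∑ i, s i ^ 2 = 1)
    (haON : ∀ i j, dotProduct (star (a i)) (a j) = if i = j then 1 else 0)
    (hBON : ∀ i j, dotProduct (star (B i)) (B j) = if i = j then 1 else 0)
    (Ψ : Fin d × ι → ℂ)
    (hΨ : Ψ = fun p => ∑ i : Fin d, (s i : ℂ) * a i p.1 * B i p.2)
    (ω : ℂ) (hω : ω = Complex.exp (2 * Real.pi * Complex.I / d))
    (at_ : Fin d → Fin d → ℂ)
    (hat : ∀ i, at_ i = ((Real.sqrt d : ℂ))⁻¹ • ∑ j : Fin d, ω ^ ((i : ℕ) * (j : ℕ)) • a j)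
    (Bt : Fin d → ι → ℂ)
    (hBt : ∀ i, Bt i = fun y => ∑ j : Fin d, (star ω) ^ ((i : ℕ) * (j : ℕ)) * (s j : ℂ) * B j y)
    (P₀ P₁ : Matrix (Fin d × ι) (Fin d × ι) ℂ)
    (hP₀ : P₀ = ∑ i ∈ Finset.univ.filter (fun i => 0 < s i),
      Matrix.vecMulVec (tensVec (a i) (B i)) (star (tensVec (a i) (B i))))
    (hP₁ : P₁ = ∑ i : Fin d,
      Matrix.vecMulVec (tensVec (at_ i) (Bt i)) (star (tensVec (at_ i) (Bt i)))) :
    P₀ * P₀ = P₀ ∧ P₀.IsHermitian ∧ P₁ * P₁ = P₁ ∧ P₁.IsHermitian ∧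
    P₀.mulVec Ψ = Ψ ∧ P₁.mulVec Ψ = Ψ ∧ (P₀ * P₁).trace = 1 := by
  classical
  -- basic constants
  set c : ℂ := ((Real.sqrt d : ℂ))⁻¹ with hc
  have hsqrt_pos : (0:ℝ) < Real.sqrt d := Real.sqrt_pos.2 (by exact_mod_cast hd)
  have hsne : ((Real.sqrt d : ℝ) : ℂ) ≠ 0 := Complex.ofReal_ne_zero.2 (ne_of_gt hsqrt_pos)
  have hsq : ((Real.sqrt d : ℝ) : ℂ) * ((Real.sqrt d : ℝ) : ℂ) = (d:ℂ) := by
    rw [← Complex.ofReal_mul, Real.mul_self_sqrt (Nat.cast_nonneg d)]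
    simp
  have hcc : c * c * (d:ℂ) = 1 := by
    rw [hc, ← hsq]
    field_simp
  have hstarc : star c = c := by
    rw [hc]
    simp [← Complex.ofReal_inv]
  have hωne : ω ≠ 0 := by rw [hω]; exact Complex.exp_ne_zero _
  have hωstar : star ω * ω = 1 := by
    have hprim : IsPrimitiveRoot ω d := by
      rw [hω]; exact Complex.isPrimitiveRoot_exp d hd.ne'
    have habs : star ω * ω = ((‖ω‖ : ℝ) : ℂ)^2 := by
      rw [Complex.star_def, ← Complex.normSq_eq_conj_mul_self]
      rw [Complex.normSq_eq_norm_sq]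
      push_cast
      ring
    have h1 : ‖ω‖ = 1 := by
      have h2 : ‖ω‖ ^ d = 1 := by
        rw [← norm_pow, hprim.pow_eq_one, norm_one]
      by_contra hne
      rcases lt_or_gt_of_ne hne with hlt | hgt
      · have h3 := pow_lt_one₀ (norm_nonneg ω) hlt hd.ne'
        rw [h2] at h3; exact lt_irrefl 1 h3
      · have h3 := one_lt_pow₀ hgt hd.ne'
        rw [h2] at h3; exact lt_irrefl 1 h3
    rw [habs, h1]
    norm_num
  -- the vectors
  set v : Fin d → Fin d × ι → ℂ := fun i => tensVec (a i) (B i) with hv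
  set u : Fin d → Fin d × ι → ℂ := fun i => tensVec (at_ i) (Bt i) with hu
  have hvON : ∀ i j, star (v i) ⬝ᵥ v j = if i = j then 1 else 0 := by
    intro i j
    rw [hv]
    rw [dot_tens, haON, hBON]
    by_cases h : i = j <;> simp [h]
  -- expanded forms
  have hat' : ∀ i, at_ i = fun x => ∑ j : Fin d, (c * ω ^ ((i:ℕ) * (j:ℕ))) * a j x := by
    intro i
    funext x
    rw [hat i]
    simp only [Pi.smul_apply, Finset.sum_apply, smul_eq_mul, Finset.mul_sum]
    exact Finset.sum_congr rfl fun j _ => by ring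
  have hsr : ∀ r : ℝ, star ((r:ℝ):ℂ) = ((r:ℝ):ℂ) := fun r => by
    rw [Complex.star_def, Complex.conj_ofReal]
  have hBt' : ∀ i, Bt i = fun y => ∑ j : Fin d, ((star ω) ^ ((i:ℕ) * (j:ℕ)) * (s j : ℂ)) * B j y :=
    hBt
  have hmm : ∀ m : ℕ, (star ω) ^ m * ω ^ m = 1 := by
    intro m
    rw [← mul_pow, hωstar, one_pow]
  -- orthonormality of at_
  have hatON : ∀ i k, star (at_ i) ⬝ᵥ at_ k = if i = k then 1 else 0 := by
    intro i k
    rw [hat' i, hat' k, dot_expand _ _ a haON]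
    have h1 : ∀ j : Fin d, star (c * ω ^ ((i:ℕ)*(j:ℕ))) * (c * ω ^ ((k:ℕ)*(j:ℕ)))
        = c * c * ((star ω) ^ ((i:ℕ)*(j:ℕ)) * ω ^ ((k:ℕ)*(j:ℕ))) := by
      intro j
      rw [star_mul', star_pow, hstarc]
      ring
    rw [Finset.sum_congr rfl fun j _ => h1 j, ← Finset.mul_sum, fourier_sum hd ω hω i k]
    by_cases h : i = k
    · simp [h, hcc]
    · simp [h]
  -- norm of Bt
  have hBtnorm : ∀ i, star (Bt i) ⬝ᵥ Bt i = 1 := by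
    intro i
    rw [hBt' i, dot_expand _ _ B hBON]
    have h1 : ∀ j : Fin d, star ((star ω) ^ ((i:ℕ)*(j:ℕ)) * (s j : ℂ))
        * ((star ω) ^ ((i:ℕ)*(j:ℕ)) * (s j : ℂ)) = ((s j : ℂ))^2 := by
      intro j
      rw [star_mul', star_pow, star_star, hsr]
      linear_combination ((s j : ℂ))^2 * hmm ((i:ℕ)*(j:ℕ))
    rw [Finset.sum_congr rfl fun j _ => h1 j]
    exact_mod_cast hs1
  -- orthonormality of u
  have huON : ∀ i k, star (u i) ⬝ᵥ u k = if i = k then 1 else 0 := by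
    intro i k
    rw [hu]
    rw [dot_tens, hatON]
    by_cases h : i = k
    · simp [h, hBtnorm k]
    · simp [h]
  -- Ψ in terms of v
  have hΨv : Ψ = fun p => ∑ i, (s i : ℂ) * v i p := by
    rw [hΨ]
    funext p
    exact Finset.sum_congr rfl fun i _ => by rw [hv]; simp [tensVec]; ring
  -- key inner products with Ψ
  have hvΨ : ∀ i, star (v i) ⬝ᵥ Ψ = (s i : ℂ) := by
    intro i
    rw [hΨv, dot_expand_left _ v hvON i]
  have hukvi : ∀ k i, star (u k) ⬝ᵥ v i = c * (s i : ℂ) := by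
    intro k i
    rw [hu, hv]
    rw [dot_tens]
    have h1 : star (at_ k) ⬝ᵥ a i = (star ω) ^ ((k:ℕ)*(i:ℕ)) * c := by
      rw [hat' k, dot_expand_right _ a haON i, star_mul', star_pow, hstarc]
      exact mul_comm _ _
    have h2 : star (Bt k) ⬝ᵥ B i = (s i : ℂ) * ω ^ ((k:ℕ)*(i:ℕ)) := by
      rw [hBt' k, dot_expand_right _ B hBON i, star_mul', star_pow, star_star, hsr]
      exact mul_comm _ _
    rw [h1, h2]
    linear_combination c * (s i : ℂ) * hmm ((k:ℕ)*(i:ℕ))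
  have hviuk : ∀ i k, star (v i) ⬝ᵥ u k = c * (s i : ℂ) := by
    intro i k
    rw [hv, hu, dot_tens]
    have h1 : star (a i) ⬝ᵥ at_ k = c * ω ^ ((k:ℕ)*(i:ℕ)) := by
      rw [hat' k, dot_expand_left _ a haON i]
    have h2 : star (B i) ⬝ᵥ Bt k = (star ω) ^ ((k:ℕ)*(i:ℕ)) * (s i : ℂ) := by
      rw [hBt' k, dot_expand_left _ B hBON i]
    rw [h1, h2]
    linear_combination c * (s i : ℂ) * hmm ((k:ℕ)*(i:ℕ))
  have huΨ : ∀ k, star (u k) ⬝ᵥ Ψ = c := by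
    intro k
    rw [hΨv, dot_sum_right]
    have h1 : ∀ i : Fin d, (s i : ℂ) * (star (u k) ⬝ᵥ v i) = c * ((s i : ℂ))^2 := by
      intro i
      rw [hukvi k i]
      ring
    rw [Finset.sum_congr rfl fun i _ => h1 i, ← Finset.mul_sum]
    have : ∑ i, ((s i : ℂ))^2 = 1 := by exact_mod_cast hs1
    rw [this, mul_one]
  -- sum over the filter equals full sum for things vanishing off it
  set S : Finset (Fin d) := Finset.univ.filter (fun i => 0 < s i) with hS
  have hSzero : ∀ i : Fin d, i ∉ S → s i = 0 := by
    intro i hi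
    rw [hS, Finset.mem_filter] at hi
    push_neg at hi
    exact le_antisymm (hi (Finset.mem_univ i)) (hs0 i)
  -- P₀ facts
  have hP₀sq : P₀ * P₀ = P₀ := by
    rw [hP₀]
    exact proj_sum_mul S v (fun i _ j _ => hvON i j)
  have hP₀herm : P₀.IsHermitian := by
    rw [hP₀]; exact proj_sum_herm S v
  have hP₁sq : P₁ * P₁ = P₁ := by
    rw [hP₁]
    exact proj_sum_mul Finset.univ u (fun i _ j _ => huON i j)
  have hP₁herm : P₁.IsHermitian := by
    rw [hP₁]; exact proj_sum_herm Finset.univ u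
  have hP₀Ψ : P₀.mulVec Ψ = Ψ := by
    rw [hP₀, mySum_mulVec]
    have h1 : ∀ i ∈ S, (vecMulVec (v i) (star (v i))).mulVec Ψ = (s i : ℂ) • v i := by
      intro i _
      rw [myVecMulVec_mulVec, hvΨ i]
    rw [Finset.sum_congr rfl h1]
    rw [hΨv]
    funext p
    rw [Finset.sum_apply]
    have h2 : ∑ i ∈ S, ((s i : ℂ) • v i) p = ∑ i ∈ S, (s i : ℂ) * v i p := rfl
    rw [h2]
    refine Finset.sum_subset (Finset.subset_univ S) fun i _ hi => ?_
    rw [hSzero i hi]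
    simp
  have hP₁Ψ : P₁.mulVec Ψ = Ψ := by
    rw [hP₁, mySum_mulVec]
    have h1 : ∀ k ∈ Finset.univ (α := Fin d),
        (vecMulVec (u k) (star (u k))).mulVec Ψ = c • u k := by
      intro k _
      rw [myVecMulVec_mulVec, huΨ k]
    rw [Finset.sum_congr rfl h1]
    funext p
    rw [Finset.sum_apply]
    have h2 : ∑ k, (c • u k) p = ∑ k, c * u k p := rfl
    rw [h2]
    -- pointwise Fourier inversion
    have hukp : ∀ k, u k p = at_ k p.1 * Bt k p.2 := fun k => rfl
    calc ∑ k, c * u k p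
        = ∑ k : Fin d, ∑ j : Fin d, ∑ l : Fin d, (c * c * (s l : ℂ) * a j p.1 * B l p.2)
            * ((star ω) ^ ((l:ℕ)*(k:ℕ)) * ω ^ ((j:ℕ)*(k:ℕ))) := by
          refine Finset.sum_congr rfl fun k _ => ?_
          rw [hukp k, hat' k, hBt' k, Finset.sum_mul_sum, Finset.mul_sum]
          refine Finset.sum_congr rfl fun j _ => ?_
          rw [Finset.mul_sum]
          refine Finset.sum_congr rfl fun l _ => ?_
          rw [Nat.mul_comm (k:ℕ) (j:ℕ), Nat.mul_comm (k:ℕ) (l:ℕ)]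
          ring
      _ = ∑ j : Fin d, ∑ l : Fin d, (c * c * (s l : ℂ) * a j p.1 * B l p.2)
            * ∑ k : Fin d, (star ω) ^ ((l:ℕ)*(k:ℕ)) * ω ^ ((j:ℕ)*(k:ℕ)) := by
          rw [Finset.sum_comm]
          refine Finset.sum_congr rfl fun j _ => ?_
          rw [Finset.sum_comm]
          refine Finset.sum_congr rfl fun l _ => ?_
          rw [Finset.mul_sum]
      _ = ∑ j, (s j : ℂ) * v j p := by
          refine Finset.sum_congr rfl fun j _ => ?_
          have h3 : ∀ l : Fin d, (c * c * (s l : ℂ) * a j p.1 * B l p.2)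
              * (∑ k : Fin d, (star ω) ^ ((l:ℕ)*(k:ℕ)) * ω ^ ((j:ℕ)*(k:ℕ)))
              = if l = j then (c * c * (d:ℂ)) * ((s l : ℂ) * a j p.1 * B l p.2) else 0 := by
            intro l
            rw [fourier_sum hd ω hω l j]
            by_cases h : l = j
            · simp [h]; ring
            · simp [h]
          rw [Finset.sum_congr rfl fun l _ => h3 l, Finset.sum_ite_eq' Finset.univ j]
          simp only [Finset.mem_univ, if_true, hcc, one_mul]
          rw [hv]
          simp [tensVec]
          ring
      _ = Ψ p := by rw [hΨv]
  -- trace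
  have htr : (P₀ * P₁).trace = 1 := by
    rw [hP₀, hP₁, Finset.sum_mul_sum, Matrix.trace_sum]
    have h1 : ∀ i ∈ S, (∑ k : Fin d, vecMulVec (v i) (star (v i))
        * vecMulVec (u k) (star (u k))).trace = ((s i : ℂ))^2 := by
      intro i _
      rw [Matrix.trace_sum]
      have h2 : ∀ k : Fin d, (vecMulVec (v i) (star (v i)) * vecMulVec (u k) (star (u k))).trace
          = (c * (s i:ℂ)) * (c * (s i:ℂ)) := by
        intro k
        rw [myVecMulVec_mul, Matrix.trace_smul, myTrace_vecMulVec, hviuk i k, hukvi k i]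
        simp
      have h5 : d • ((c * (s i:ℂ)) * (c * (s i:ℂ))) = ((s i:ℂ))^2 := by
        rw [nsmul_eq_mul]
        linear_combination ((s i:ℂ))^2 * hcc
      rw [Finset.sum_congr rfl fun k _ => h2 k, Finset.sum_const, Finset.card_univ,
        Fintype.card_fin, h5]
    rw [Finset.sum_congr rfl h1]
    have h4 : ∑ i ∈ S, ((s i : ℂ))^2 = ∑ i, ((s i : ℂ))^2 := by
      refine Finset.sum_subset (Finset.subset_univ S) fun i _ hi => ?_
      rw [hSzero i hi]
      simp
    rw [h4]
    exact_mod_cast hs1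
  exact ⟨hP₀sq, hP₀herm, hP₁sq, hP₁herm, hP₀Ψ, hP₁Ψ, htr⟩
end

section
/- With P₀, P₁ as above and P̄_m = P_m − |Ψ⟩⟨Ψ| (m = 0,1), the operators P̄₀ and P̄₁ are projectors and are mutually orthogonal: P̄₀P̄₁ = 0. Consequently, ‖(P̄₀ + P̄₁)/2‖ ≤ 1/2, so the verification operator Ω = (P₀+P₁)/2 satisfies β(Ω) ≤ 1/2, i.e., Ω ≤ (1/2)(|Ψ⟩⟨Ψ| + 1). -/
open scoped Matrix.Norms.L2Operator ComplexOrder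
open Matrix

section Aux
variable {n : Type*} [Fintype n]

lemma vmv_mul_vmv (x y z w : n → ℂ) :
    vecMulVec x y * vecMulVec z w = (y ⬝ᵥ z) • vecMulVec x w := by
  ext i j
  simp only [mul_apply, vecMulVec_apply, Matrix.smul_apply, dotProduct, smul_eq_mul, Finset.sum_mul]
  exact Finset.sum_congr rfl fun k _ => by ring

omit [Fintype n] in
lemma vmv_herm (x : n → ℂ) : (vecMulVec x (star x)).IsHermitian := by
  ext i j
  simp [Matrix.conjTranspose_apply, vecMulVec_apply, mul_comm]

lemma tens_dot {d : ℕ} {ι : Type*} [Fintype ι] (u u' : Fin d → ℂ) (v v' : ι → ℂ) :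
    star (tensVec u v) ⬝ᵥ tensVec u' v' = (star u ⬝ᵥ u') * (star v ⬝ᵥ v') := by
  simp only [dotProduct, Fintype.sum_prod_type, Finset.sum_mul_sum]
  refine Finset.sum_congr rfl fun x _ => Finset.sum_congr rfl fun y _ => ?_
  simp only [tensVec, Pi.star_apply, star_mul']
  ring

lemma sum_dotProduct' {κ : Type*} (S : Finset κ) (f : κ → n → ℂ) (v : n → ℂ) :
    (∑ i ∈ S, f i) ⬝ᵥ v = ∑ i ∈ S, f i ⬝ᵥ v := by
  simp only [dotProduct, Finset.sum_apply, Finset.sum_mul]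
  exact Finset.sum_comm

lemma dotProduct_sum' {κ : Type*} (S : Finset κ) (f : κ → n → ℂ) (v : n → ℂ) :
    v ⬝ᵥ (∑ i ∈ S, f i) = ∑ i ∈ S, v ⬝ᵥ f i := by
  simp only [dotProduct, Finset.sum_apply, Finset.mul_sum]
  exact Finset.sum_comm

lemma dot_lincomb {d : ℕ} (S : Finset (Fin d)) (c e : Fin d → ℂ) (f g : Fin d → n → ℂ)
    (hON : ∀ i ∈ S, ∀ j ∈ S, star (f i) ⬝ᵥ g j = if i = j then 1 else 0) :
    star (∑ i ∈ S, c i • f i) ⬝ᵥ (∑ j ∈ S, e j • g j) = ∑ i ∈ S, star (c i) * e i := by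
  rw [star_sum, sum_dotProduct']
  refine Finset.sum_congr rfl fun i hi => ?_
  rw [star_smul, smul_dotProduct, dotProduct_sum']
  rw [Finset.sum_congr rfl fun j hj => by
    rw [dotProduct_smul, hON i hi j hj] ]
  rw [Finset.sum_congr rfl (fun j (hj : j ∈ S) => by
    rw [smul_ite, smul_zero] : ∀ j ∈ S, (e j • if i = j then (1:ℂ) else 0) = if i = j then e j • 1 else 0)]
  rw [Finset.sum_ite_eq S i (fun j => e j • 1)]
  simp [hi, smul_eq_mul]

lemma dot_lincomb_right {d : ℕ} (e : Fin d → ℂ) (f g : Fin d → n → ℂ) (i : Fin d)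
    (hON : ∀ j, star (f i) ⬝ᵥ g j = if i = j then 1 else 0) :
    star (f i) ⬝ᵥ (∑ j : Fin d, e j • g j) = e i := by
  rw [dotProduct_sum']
  rw [Finset.sum_congr rfl fun j _ => by rw [dotProduct_smul, hON j]]
  rw [Finset.sum_congr rfl (fun j _ => by
    rw [smul_ite, smul_zero] : ∀ j ∈ Finset.univ, (e j • if i = j then (1:ℂ) else 0) = if i = j then e j • 1 else 0)]
  simp [Finset.sum_ite_eq]

lemma dot_lincomb_left {d : ℕ} (c : Fin d → ℂ) (f g : Fin d → n → ℂ) (j : Fin d)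
    (hON : ∀ i, star (f i) ⬝ᵥ g j = if i = j then 1 else 0) :
    star (∑ i : Fin d, c i • f i) ⬝ᵥ g j = star (c j) := by
  rw [star_sum, sum_dotProduct']
  rw [Finset.sum_congr rfl fun i _ => by
    rw [star_smul, smul_dotProduct, hON i, smul_ite, smul_zero]]
  simp [Finset.sum_ite_eq', smul_eq_mul]

omit [Fintype n] in
lemma sum_smul_vmv {κ : Type*} (S : Finset κ) (c : κ → ℂ) (f : κ → n → ℂ) (y : n → ℂ) :
    ∑ i ∈ S, c i • vecMulVec (f i) y = vecMulVec (∑ i ∈ S, c i • f i) y := by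
  ext p q
  simp only [Finset.sum_apply, Matrix.sum_apply, Matrix.smul_apply, vecMulVec_apply, smul_eq_mul,
    Pi.smul_apply, Finset.sum_mul]
  exact Finset.sum_congr rfl fun k _ => by ring

omit [Fintype n] in
lemma vmv_star_comb {κ : Type*} (S : Finset κ) (c : κ → ℂ) (f : κ → n → ℂ) (x : n → ℂ) :
    vecMulVec x (star (∑ i ∈ S, c i • f i)) = ∑ i ∈ S, star (c i) • vecMulVec x (star (f i)) := by
  ext p q
  simp only [Matrix.sum_apply, Matrix.smul_apply, vecMulVec_apply, smul_eq_mul, Pi.star_apply,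
    Finset.sum_apply, Pi.smul_apply, star_sum, star_smul, smul_eq_mul, Finset.mul_sum]
  exact Finset.sum_congr rfl fun k _ => by ring

lemma proj_of_ON {κ : Type*} [DecidableEq κ] (S : Finset κ) (f : κ → n → ℂ)
    (hON : ∀ i ∈ S, ∀ j ∈ S, star (f i) ⬝ᵥ f j = if i = j then 1 else 0) :
    (∑ i ∈ S, vecMulVec (f i) (star (f i))) * (∑ j ∈ S, vecMulVec (f j) (star (f j)))
      = ∑ i ∈ S, vecMulVec (f i) (star (f i)) := by
  rw [Finset.sum_mul_sum]
  refine Finset.sum_congr rfl fun i hi => ?_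
  rw [Finset.sum_congr rfl fun j hj => by
    rw [vmv_mul_vmv, hON i hi j hj, ite_smul, one_smul, zero_smul]]
  rw [Finset.sum_ite_eq S i (fun j => vecMulVec (f i) (star (f j))), if_pos hi]

lemma mul_eq_vmv {κ κ' : Type*} (S : Finset κ) (T : Finset κ') (f : κ → n → ℂ) (g : κ' → n → ℂ)
    (c : κ → ℂ) (e : κ' → ℂ)
    (h : ∀ i ∈ S, ∀ j ∈ T, star (f i) ⬝ᵥ g j = c i * star (e j)) :
    (∑ i ∈ S, vecMulVec (f i) (star (f i))) * (∑ j ∈ T, vecMulVec (g j) (star (g j)))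
      = vecMulVec (∑ i ∈ S, c i • f i) (star (∑ j ∈ T, e j • g j)) := by
  calc (∑ i ∈ S, vecMulVec (f i) (star (f i))) * (∑ j ∈ T, vecMulVec (g j) (star (g j)))
      = ∑ i ∈ S, ∑ j ∈ T, (c i * star (e j)) • vecMulVec (f i) (star (g j)) := by
        rw [Finset.sum_mul_sum]
        exact Finset.sum_congr rfl fun i hi => Finset.sum_congr rfl fun j hj => by
          rw [vmv_mul_vmv, h i hi j hj]
    _ = ∑ i ∈ S, c i • vecMulVec (f i) (star (∑ j ∈ T, e j • g j)) := by
        refine Finset.sum_congr rfl fun i hi => ?_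
        rw [vmv_star_comb, Finset.smul_sum]
        exact Finset.sum_congr rfl fun j hj => by rw [smul_smul]
    _ = vecMulVec (∑ i ∈ S, c i • f i) (star (∑ j ∈ T, e j • g j)) :=
        sum_smul_vmv S c f _

lemma mul_vmv_left {κ : Type*} (S : Finset κ) (f : κ → n → ℂ) (c : κ → ℂ) (Ψ : n → ℂ)
    (h : ∀ i ∈ S, star (f i) ⬝ᵥ Ψ = c i) (hc : Ψ = ∑ i ∈ S, c i • f i) :
    (∑ i ∈ S, vecMulVec (f i) (star (f i))) * vecMulVec Ψ (star Ψ) = vecMulVec Ψ (star Ψ) := by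
  rw [Finset.sum_mul]
  rw [Finset.sum_congr rfl fun i hi => by rw [vmv_mul_vmv, h i hi]]
  rw [sum_smul_vmv, ← hc]

lemma vmv_mul_right {κ : Type*} (S : Finset κ) (f : κ → n → ℂ) (c : κ → ℂ) (Ψ : n → ℂ)
    (h : ∀ i ∈ S, star Ψ ⬝ᵥ f i = star (c i)) (hc : Ψ = ∑ i ∈ S, c i • f i) :
    vecMulVec Ψ (star Ψ) * (∑ i ∈ S, vecMulVec (f i) (star (f i))) = vecMulVec Ψ (star Ψ) := by
  rw [Finset.mul_sum]
  rw [Finset.sum_congr rfl fun i hi => by rw [vmv_mul_vmv, h i hi]]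
  rw [← vmv_star_comb, ← hc]

end Aux

lemma root_sum {d : ℕ} (hd : 0 < d) (ω : ℂ) (hprim : IsPrimitiveRoot ω d)
    (hu : ω * star ω = 1) (k l : Fin d) :
    ∑ j : Fin d, ω ^ ((j:ℕ) * (k:ℕ)) * (star ω) ^ ((j:ℕ) * (l:ℕ)) =
      if k = l then (d:ℂ) else 0 := by
  have hterm : ∀ j : Fin d, ω ^ ((j:ℕ)*(k:ℕ)) * (star ω) ^ ((j:ℕ)*(l:ℕ))
      = (ω ^ (k:ℕ) * (star ω) ^ (l:ℕ)) ^ (j:ℕ) := fun j => by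
    rw [mul_pow, ← pow_mul, ← pow_mul, Nat.mul_comm (k:ℕ), Nat.mul_comm (l:ℕ)]
  simp only [hterm]
  by_cases hkl : k = l
  · subst hkl
    have h1 : ω ^ (k:ℕ) * (star ω) ^ (k:ℕ) = 1 := by
      rw [← mul_pow, hu, one_pow]
    rw [if_pos rfl]
    calc ∑ j : Fin d, (ω ^ (k:ℕ) * (star ω) ^ (k:ℕ)) ^ (j:ℕ)
        = ∑ _j : Fin d, (1:ℂ) := Finset.sum_congr rfl fun j _ => by rw [h1, one_pow]
      _ = d := by simp
  · rw [if_neg hkl]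
    set ζ := ω ^ (k:ℕ) * (star ω) ^ (l:ℕ) with hζ
    have hζd : ζ ^ d = 1 := by
      rw [hζ, mul_pow, ← pow_mul, ← pow_mul, Nat.mul_comm (k:ℕ), Nat.mul_comm (l:ℕ),
        pow_mul, pow_mul, hprim.pow_eq_one, ← star_pow, hprim.pow_eq_one]
      simp
    have hζ1 : ζ ≠ 1 := by
      intro h1
      have hl : (star ω) ^ (l:ℕ) * ω ^ (l:ℕ) = 1 := by
        rw [← mul_pow, mul_comm, hu, one_pow]
      have : ω ^ (k:ℕ) = ω ^ (l:ℕ) := by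
        calc ω ^ (k:ℕ) = ω ^ (k:ℕ) * ((star ω) ^ (l:ℕ) * ω ^ (l:ℕ)) := by rw [hl, mul_one]
        _ = ζ * ω ^ (l:ℕ) := by rw [hζ]; ring
        _ = ω ^ (l:ℕ) := by rw [h1, one_mul]
      exact hkl (Fin.ext (hprim.pow_inj k.isLt l.isLt this))
    rw [Fin.sum_univ_eq_sum_range (fun j => ζ ^ j) d, geom_sum_eq hζ1, hζd]
    simp

lemma root_sum' {d : ℕ} (hd : 0 < d) (ω : ℂ) (hprim : IsPrimitiveRoot ω d)
    (hu : ω * star ω = 1) (k l : Fin d) :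
    ∑ j : Fin d, (star ω) ^ ((j:ℕ) * (k:ℕ)) * ω ^ ((j:ℕ) * (l:ℕ)) =
      if k = l then (d:ℂ) else 0 := by
  have := congrArg star (root_sum hd ω hprim hu k l)
  rw [star_sum] at this
  simp only [star_mul', star_pow, star_star] at this
  rw [this]
  split <;> simp

section ProjAlg
variable {n : Type*} [Fintype n]

lemma proj_sub (P E : Matrix n n ℂ) (hPP : P * P = P) (hPE : P * E = E)
    (hEP : E * P = E) (hEE : E * E = E) : (P - E) * (P - E) = P - E := by
  rw [sub_mul, mul_sub, mul_sub, hPP, hPE, hEP, hEE]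
  abel

lemma proj_cross (P P' E : Matrix n n ℂ) (hPP' : P * P' = E) (hPE : P * E = E)
    (hEP' : E * P' = E) (hEE : E * E = E) : (P - E) * (P' - E) = 0 := by
  rw [sub_mul, mul_sub, mul_sub, hPP', hPE, hEP', hEE]
  abel

lemma proj_add (Q E : Matrix n n ℂ) (hQQ : Q * Q = Q) (hQE : Q * E = 0)
    (hEQ : E * Q = 0) (hEE : E * E = E) : (Q + E) * (Q + E) = Q + E := by
  rw [add_mul, mul_add, mul_add, hQQ, hQE, hEQ, hEE]
  abel

end ProjAlg
/-- Subtracting `|Ψ⟩⟨Ψ|` from the two test projectors of the bipartite SD protocol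
yields mutually orthogonal projectors `P̄₀, P̄₁`; hence `‖(P̄₀+P̄₁)/2‖ ≤ 1/2`, so the
verification operator `Ω = (P₀+P₁)/2` satisfies `Ω ≤ (|Ψ⟩⟨Ψ| + 1)/2`. -/
theorem stmt7 (d : ℕ) (hd : 0 < d) {ι : Type*} [Fintype ι] [DecidableEq ι]
    (s : Fin d → ℝ) (a : Fin d → Fin d → ℂ) (B : Fin d → ι → ℂ)
    (hs0 : ∀ i, 0 ≤ s i) (hs1 : ∑ i, s i ^ 2 = 1)
    (haON : ∀ i j, dotProduct (star (a i)) (a j) = if i = j then 1 else 0)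
    (hBON : ∀ i j, dotProduct (star (B i)) (B j) = if i = j then 1 else 0)
    (Ψ : Fin d × ι → ℂ)
    (hΨ : Ψ = fun p => ∑ i : Fin d, (s i : ℂ) * a i p.1 * B i p.2)
    (ω : ℂ) (hω : ω = Complex.exp (2 * Real.pi * Complex.I / d))
    (at_ : Fin d → Fin d → ℂ)
    (hat : ∀ i, at_ i = ((Real.sqrt d : ℂ))⁻¹ • ∑ j : Fin d, ω ^ ((i : ℕ) * (j : ℕ)) • a j)
    (Bt : Fin d → ι → ℂ)
    (hBt : ∀ i, Bt i = fun y => ∑ j : Fin d, (star ω) ^ ((i : ℕ) * (j : ℕ)) * (s j : ℂ) * B j y)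
    (P₀ P₁ : Matrix (Fin d × ι) (Fin d × ι) ℂ)
    (hP₀ : P₀ = ∑ i ∈ Finset.univ.filter (fun i => 0 < s i),
      Matrix.vecMulVec (tensVec (a i) (B i)) (star (tensVec (a i) (B i))))
    (hP₁ : P₁ = ∑ i : Fin d,
      Matrix.vecMulVec (tensVec (at_ i) (Bt i)) (star (tensVec (at_ i) (Bt i))))
    (Pb₀ Pb₁ : Matrix (Fin d × ι) (Fin d × ι) ℂ)
    (hPb₀ : Pb₀ = P₀ - Matrix.vecMulVec Ψ (star Ψ))
    (hPb₁ : Pb₁ = P₁ - Matrix.vecMulVec Ψ (star Ψ)) :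
    Pb₀ * Pb₀ = Pb₀ ∧ Pb₀.IsHermitian ∧ Pb₁ * Pb₁ = Pb₁ ∧ Pb₁.IsHermitian ∧
    Pb₀ * Pb₁ = 0 ∧
    ‖(2 : ℂ)⁻¹ • (Pb₀ + Pb₁)‖ ≤ 1 / 2 ∧
    ((2 : ℂ)⁻¹ • (Matrix.vecMulVec Ψ (star Ψ) + 1) - (2 : ℂ)⁻¹ • (P₀ + P₁)).PosSemidef := by
  classical
  -- abbreviations
  set v : Fin d → (Fin d × ι → ℂ) := fun i => tensVec (a i) (B i) with hvdef
  set w : Fin d → (Fin d × ι → ℂ) := fun i => tensVec (at_ i) (Bt i) with hwdef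
  set S : Finset (Fin d) := Finset.univ.filter (fun i => 0 < s i) with hSdef
  set E : Matrix (Fin d × ι) (Fin d × ι) ℂ := Matrix.vecMulVec Ψ (star Ψ) with hEdef
  have hP₀' : P₀ = ∑ i ∈ S, vecMulVec (v i) (star (v i)) := by
    simp only [hvdef]; exact hP₀
  have hP₁' : P₁ = ∑ i : Fin d, vecMulVec (w i) (star (w i)) := by
    simp only [hwdef]; exact hP₁
  -- scalar facts
  have hd' : (d:ℂ) ≠ 0 := Nat.cast_ne_zero.mpr hd.ne'
  have hsd : ((Real.sqrt d : ℝ) : ℂ) * ((Real.sqrt d : ℝ) : ℂ) = (d:ℂ) := by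
    rw [← Complex.ofReal_mul, Real.mul_self_sqrt (Nat.cast_nonneg d)]
    simp
  have hsd0 : ((Real.sqrt d : ℝ) : ℂ) ≠ 0 := fun h => hd' (by rw [← hsd, h, mul_zero])
  set c₀ : ℂ := ((Real.sqrt d : ℝ) : ℂ)⁻¹ with hc₀
  have hstarc₀ : star c₀ = c₀ := by
    simp [hc₀, Complex.star_def, map_inv₀, Complex.conj_ofReal]
  have hc₀d : c₀ * c₀ * d = 1 := by
    rw [hc₀, ← mul_inv, hsd]
    exact inv_mul_cancel₀ hd'
  have hu : ω * star ω = 1 := by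
    rw [hω, Complex.star_def, ← Complex.exp_conj, ← Complex.exp_add]
    have hz : (2 * (Real.pi:ℂ) * Complex.I / d) + (starRingEnd ℂ) (2 * (Real.pi:ℂ) * Complex.I / d) = 0 := by
      simp only [map_div₀, _root_.map_mul, Complex.conj_I, Complex.conj_ofReal, map_ofNat, map_natCast]
      ring
    rw [hz, Complex.exp_zero]
  have hprim : IsPrimitiveRoot ω d := by
    rw [hω]; exact Complex.isPrimitiveRoot_exp d hd.ne'
  have hmix : ∀ (m : ℕ), ω ^ m * (star ω) ^ m = 1 := fun m => by
    rw [← mul_pow, hu, one_pow]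
  -- rewriting the tilde vectors as linear combinations
  have hat' : ∀ i, at_ i = ∑ k : Fin d, (c₀ * ω ^ ((i:ℕ) * (k:ℕ))) • a k := by
    intro i
    rw [hat i, Finset.smul_sum]
    exact Finset.sum_congr rfl fun k _ => by rw [smul_smul]
  have hBt' : ∀ i, Bt i = ∑ k : Fin d, ((star ω) ^ ((i:ℕ) * (k:ℕ)) * (s k : ℂ)) • B k := by
    intro i
    funext y
    rw [hBt i]
    simp only [Finset.sum_apply, Pi.smul_apply, smul_eq_mul]
  -- dot product facts
  have hvv : ∀ i j, star (v i) ⬝ᵥ v j = if i = j then 1 else 0 := fun i j => by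
    rw [hvdef]
    simp only []
    rw [tens_dot, haON, hBON]
    split <;> simp
  have hata : ∀ i j, star (at_ i) ⬝ᵥ at_ j = if i = j then 1 else 0 := by
    intro i j
    rw [hat' i, hat' j,
      dot_lincomb Finset.univ (fun k => c₀ * ω ^ ((i:ℕ) * (k:ℕ)))
        (fun k => c₀ * ω ^ ((j:ℕ) * (k:ℕ))) a a (fun i _ j _ => haON i j)]
    have hterm : ∀ k : Fin d, star (c₀ * ω ^ ((i:ℕ)*(k:ℕ))) * (c₀ * ω ^ ((j:ℕ)*(k:ℕ)))
        = (c₀ * c₀) * ((star ω) ^ ((k:ℕ)*(i:ℕ)) * ω ^ ((k:ℕ)*(j:ℕ))) := fun k => by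
      rw [star_mul', star_pow, hstarc₀, Nat.mul_comm (i:ℕ), Nat.mul_comm (j:ℕ)]
      ring
    rw [Finset.sum_congr rfl fun k _ => hterm k, ← Finset.mul_sum,
      root_sum' hd ω hprim hu i j]
    split
    · exact hc₀d
    · rw [mul_zero]
  have hBtBt : ∀ i, star (Bt i) ⬝ᵥ Bt i = 1 := by
    intro i
    rw [hBt' i,
      dot_lincomb Finset.univ (fun k => (star ω) ^ ((i:ℕ) * (k:ℕ)) * (s k : ℂ))
        (fun k => (star ω) ^ ((i:ℕ) * (k:ℕ)) * (s k : ℂ)) B B (fun i _ j _ => hBON i j)]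
    have hterm : ∀ k : Fin d,
        star ((star ω) ^ ((i:ℕ)*(k:ℕ)) * (s k:ℂ)) * ((star ω) ^ ((i:ℕ)*(k:ℕ)) * (s k:ℂ))
        = ((s k:ℂ))^2 := fun k => by
      rw [star_mul', star_pow, star_star, Complex.star_def, Complex.conj_ofReal]
      calc ω ^ ((i:ℕ)*(k:ℕ)) * (s k:ℂ) * ((star ω) ^ ((i:ℕ)*(k:ℕ)) * (s k:ℂ))
          = (ω ^ ((i:ℕ)*(k:ℕ)) * (star ω) ^ ((i:ℕ)*(k:ℕ))) * ((s k:ℂ))^2 := by ring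
        _ = ((s k:ℂ))^2 := by rw [hmix, one_mul]
    rw [Finset.sum_congr rfl fun k _ => hterm k]
    have hc : ((∑ i, s i ^ 2 : ℝ) : ℂ) = 1 := by rw [hs1]; norm_num
    push_cast at hc
    exact hc
  have hww : ∀ i j, star (w i) ⬝ᵥ w j = if i = j then 1 else 0 := by
    intro i j
    rw [hwdef]
    simp only []
    rw [tens_dot, hata]
    by_cases hij : i = j
    · subst hij; simp [hBtBt i]
    · simp [hij]
  have hva : ∀ i j, star (a i) ⬝ᵥ at_ j = c₀ * ω ^ ((j:ℕ)*(i:ℕ)) := fun i j => by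
    rw [hat' j]
    exact dot_lincomb_right (fun k => c₀ * ω ^ ((j:ℕ) * (k:ℕ))) a a i (haON i)
  have hvB : ∀ i j, star (B i) ⬝ᵥ Bt j = (star ω) ^ ((j:ℕ)*(i:ℕ)) * (s i:ℂ) := fun i j => by
    rw [hBt' j]
    exact dot_lincomb_right (fun k => (star ω) ^ ((j:ℕ) * (k:ℕ)) * (s k:ℂ)) B B i (hBON i)
  have hvw : ∀ i j, star (v i) ⬝ᵥ w j = (s i:ℂ) * c₀ := by
    intro i j
    rw [hvdef, hwdef]
    simp only []
    rw [tens_dot, hva i j, hvB i j]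
    calc c₀ * ω ^ ((j:ℕ)*(i:ℕ)) * ((star ω) ^ ((j:ℕ)*(i:ℕ)) * (s i:ℂ))
        = (ω ^ ((j:ℕ)*(i:ℕ)) * (star ω) ^ ((j:ℕ)*(i:ℕ))) * ((s i:ℂ) * c₀) := by ring
      _ = (s i:ℂ) * c₀ := by rw [hmix, one_mul]
  have hwa : ∀ i j, star (at_ i) ⬝ᵥ a j = star (c₀ * ω ^ ((i:ℕ)*(j:ℕ))) := fun i j => by
    rw [hat' i]
    exact dot_lincomb_left (fun k => c₀ * ω ^ ((i:ℕ) * (k:ℕ))) a a j (fun k => haON k j)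
  have hwB : ∀ i j, star (Bt i) ⬝ᵥ B j = star ((star ω) ^ ((i:ℕ)*(j:ℕ)) * (s j:ℂ)) := fun i j => by
    rw [hBt' i]
    exact dot_lincomb_left (fun k => (star ω) ^ ((i:ℕ) * (k:ℕ)) * (s k:ℂ)) B B j (fun k => hBON k j)
  have hwv : ∀ i j, star (w i) ⬝ᵥ v j = (s j:ℂ) * c₀ := by
    intro i j
    rw [hwdef, hvdef]
    simp only []
    have e1 : star (c₀ * ω ^ ((i:ℕ)*(j:ℕ))) = c₀ * (star ω) ^ ((i:ℕ)*(j:ℕ)) := by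
      rw [star_mul', hstarc₀, star_pow]
    have e2 : star ((star ω) ^ ((i:ℕ)*(j:ℕ)) * (s j:ℂ)) = ω ^ ((i:ℕ)*(j:ℕ)) * (s j:ℂ) := by
      rw [star_mul', star_pow, star_star, Complex.star_def, Complex.conj_ofReal]
    rw [tens_dot, hwa i j, hwB i j, e1, e2]
    calc c₀ * (star ω) ^ ((i:ℕ)*(j:ℕ)) * (ω ^ ((i:ℕ)*(j:ℕ)) * (s j:ℂ))
        = (ω ^ ((i:ℕ)*(j:ℕ)) * (star ω) ^ ((i:ℕ)*(j:ℕ))) * ((s j:ℂ) * c₀) := by ring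
      _ = (s j:ℂ) * c₀ := by rw [hmix, one_mul]
  -- decompositions of Ψ
  have hΨv : Ψ = ∑ i : Fin d, (s i : ℂ) • v i := by
    funext p
    rw [hΨ]
    simp only [Finset.sum_apply, Pi.smul_apply, smul_eq_mul, hvdef]
    exact Finset.sum_congr rfl fun i _ => by rw [tensVec]; ring
  have hΨvS : Ψ = ∑ i ∈ S, (s i:ℂ) • v i := by
    rw [hΨv]
    symm
    apply Finset.sum_subset (Finset.subset_univ S)
    intro x _ hx
    have hx0 : ¬ 0 < s x := by
      simpa [hSdef, Finset.mem_filter] using hx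
    have : s x = 0 := le_antisymm (not_lt.mp hx0) (hs0 x)
    simp [this]
  have hsumw : ∑ j : Fin d, w j = ((Real.sqrt d : ℝ) : ℂ) • Ψ := by
    funext p
    have expand : ∀ j : Fin d, w j p =
        ∑ k : Fin d, ∑ l : Fin d, c₀ * (ω ^ ((j:ℕ)*(k:ℕ)) * (star ω) ^ ((j:ℕ)*(l:ℕ)))
          * ((s l : ℂ) * (a k p.1 * B l p.2)) := by
      intro j
      show (at_ j p.1) * (Bt j p.2) = _
      rw [hat' j, hBt' j]
      simp only [Finset.sum_apply, Pi.smul_apply, smul_eq_mul, Finset.sum_mul_sum]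
      exact Finset.sum_congr rfl fun k _ => Finset.sum_congr rfl fun l _ => by ring
    simp only [Finset.sum_apply]
    rw [Finset.sum_congr rfl fun j _ => expand j]
    rw [Finset.sum_comm]
    rw [Finset.sum_congr rfl fun k (_ : k ∈ Finset.univ) => Finset.sum_comm]
    have inner : ∀ k l : Fin d,
        ∑ j : Fin d, c₀ * (ω ^ ((j:ℕ)*(k:ℕ)) * (star ω) ^ ((j:ℕ)*(l:ℕ)))
          * ((s l:ℂ) * (a k p.1 * B l p.2))
        = (if k = l then (d:ℂ) else 0) * (c₀ * ((s l:ℂ) * (a k p.1 * B l p.2))) := by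
      intro k l
      rw [show ∑ j : Fin d, c₀ * (ω ^ ((j:ℕ)*(k:ℕ)) * (star ω) ^ ((j:ℕ)*(l:ℕ)))
            * ((s l:ℂ) * (a k p.1 * B l p.2))
          = (∑ j : Fin d, ω ^ ((j:ℕ)*(k:ℕ)) * (star ω) ^ ((j:ℕ)*(l:ℕ)))
            * (c₀ * ((s l:ℂ) * (a k p.1 * B l p.2))) from by
        rw [Finset.sum_mul]
        exact Finset.sum_congr rfl fun j _ => by ring]
      rw [root_sum hd ω hprim hu k l]
    rw [Finset.sum_congr rfl fun k _ => Finset.sum_congr rfl fun l _ => inner k l]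
    have collapse : ∀ k : Fin d,
        ∑ l : Fin d, (if k = l then (d:ℂ) else 0) * (c₀ * ((s l:ℂ) * (a k p.1 * B l p.2)))
        = (d:ℂ) * (c₀ * ((s k:ℂ) * (a k p.1 * B k p.2))) := by
      intro k
      simp [ite_mul, Finset.sum_ite_eq]
    rw [Finset.sum_congr rfl fun k _ => collapse k]
    rw [hΨ]
    simp only [Pi.smul_apply, smul_eq_mul, Finset.mul_sum]
    refine Finset.sum_congr rfl fun k _ => ?_
    have : (d:ℂ) * c₀ = ((Real.sqrt d : ℝ) : ℂ) := by
      rw [hc₀, ← hsd]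
      field_simp
    calc (d:ℂ) * (c₀ * ((s k:ℂ) * (a k p.1 * B k p.2)))
        = ((d:ℂ) * c₀) * ((s k:ℂ) * (a k p.1 * B k p.2)) := by ring
      _ = ((Real.sqrt d : ℝ) : ℂ) * ((s k:ℂ) * a k p.1 * B k p.2) := by rw [this]; ring
  have hΨw : Ψ = ∑ j : Fin d, c₀ • w j := by
    rw [← Finset.smul_sum, hsumw, smul_smul, hc₀, inv_mul_cancel₀ hsd0, one_smul]
  -- dot products with Ψ
  have hvΨ : ∀ i, star (v i) ⬝ᵥ Ψ = (s i:ℂ) := fun i => by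
    rw [hΨv]
    exact dot_lincomb_right (fun j => (s j:ℂ)) v v i (hvv i)
  have hΨv' : ∀ i, star Ψ ⬝ᵥ v i = star ((s i:ℂ)) := fun i => by
    rw [hΨv]
    exact dot_lincomb_left (fun j => (s j:ℂ)) v v i (fun k => hvv k i)
  have hwΨ : ∀ j, star (w j) ⬝ᵥ Ψ = c₀ := fun j => by
    rw [hΨw]
    exact dot_lincomb_right (fun _ => c₀) w w j (hww j)
  have hΨw' : ∀ j, star Ψ ⬝ᵥ w j = star c₀ := fun j => by
    rw [hΨw]
    exact dot_lincomb_left (fun _ => c₀) w w j (fun k => hww k j)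
  have hΨΨ : star Ψ ⬝ᵥ Ψ = 1 := by
    rw [hΨv, dot_lincomb Finset.univ (fun i => (s i:ℂ)) (fun i => (s i:ℂ)) v v
      (fun i _ j _ => hvv i j)]
    have hterm : ∀ k : Fin d, star ((s k:ℂ)) * (s k:ℂ) = ((s k:ℂ))^2 := fun k => by
      rw [Complex.star_def, Complex.conj_ofReal]; ring
    rw [Finset.sum_congr rfl fun k _ => hterm k]
    have hc : ((∑ i, s i ^ 2 : ℝ) : ℂ) = 1 := by rw [hs1]; norm_num
    push_cast at hc
    exact hc
  -- matrix identities
  have h00 : P₀ * P₀ = P₀ := by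
    rw [hP₀']; exact proj_of_ON S v (fun i _ j _ => hvv i j)
  have h11 : P₁ * P₁ = P₁ := by
    rw [hP₁']; exact proj_of_ON Finset.univ w (fun i _ j _ => hww i j)
  have h0E : P₀ * E = E := by
    rw [hP₀', hEdef]
    exact mul_vmv_left S v (fun i => (s i:ℂ)) Ψ (fun i _ => hvΨ i) hΨvS
  have hE0 : E * P₀ = E := by
    rw [hP₀', hEdef]
    exact vmv_mul_right S v (fun i => (s i:ℂ)) Ψ (fun i _ => hΨv' i) hΨvS
  have h1E : P₁ * E = E := by
    rw [hP₁', hEdef]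
    exact mul_vmv_left Finset.univ w (fun _ => c₀) Ψ (fun j _ => hwΨ j) hΨw
  have hE1 : E * P₁ = E := by
    rw [hP₁', hEdef]
    exact vmv_mul_right Finset.univ w (fun _ => c₀) Ψ (fun j _ => hΨw' j) hΨw
  have hEE : E * E = E := by
    rw [hEdef, vmv_mul_vmv, hΨΨ, one_smul]
  have h01 : P₀ * P₁ = E := by
    rw [hP₀', hP₁', hEdef]
    rw [mul_eq_vmv S Finset.univ v w (fun i => (s i:ℂ)) (fun _ => c₀)
      (fun i _ j _ => by rw [hvw i j, hstarc₀])]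
    rw [← hΨvS, ← hΨw]
  -- hermiticity
  have hP₀h : P₀.IsHermitian := by
    rw [hP₀']
    show (∑ i ∈ S, vecMulVec (v i) (star (v i)))ᴴ = _
    rw [conjTranspose_sum]
    exact Finset.sum_congr rfl fun i _ => vmv_herm (v i)
  have hP₁h : P₁.IsHermitian := by
    rw [hP₁']
    show (∑ i : Fin d, vecMulVec (w i) (star (w i)))ᴴ = _
    rw [conjTranspose_sum]
    exact Finset.sum_congr rfl fun i _ => vmv_herm (w i)
  have hEh : E.IsHermitian := by rw [hEdef]; exact vmv_herm Ψ
  have hPb0h : Pb₀.IsHermitian := by rw [hPb₀]; exact hP₀h.sub hEh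
  have hPb1h : Pb₁.IsHermitian := by rw [hPb₁]; exact hP₁h.sub hEh
  -- projector identities for Pb
  have hPb0sq : Pb₀ * Pb₀ = Pb₀ := by
    rw [hPb₀]; exact proj_sub _ _ h00 h0E hE0 hEE
  have hPb1sq : Pb₁ * Pb₁ = Pb₁ := by
    rw [hPb₁]; exact proj_sub _ _ h11 h1E hE1 hEE
  have hPb01 : Pb₀ * Pb₁ = 0 := by
    rw [hPb₀, hPb₁]; exact proj_cross _ _ _ h01 h0E hE1 hEE
  have hPb10 : Pb₁ * Pb₀ = 0 := by
    have h := congrArg conjTranspose hPb01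
    rw [conjTranspose_mul, hPb1h, hPb0h, conjTranspose_zero] at h
    exact h
  -- norm bound
  have hQh : (Pb₀ + Pb₁).IsHermitian := hPb0h.add hPb1h
  have hQQ : (Pb₀ + Pb₁) * (Pb₀ + Pb₁) = Pb₀ + Pb₁ :=
    proj_add _ _ hPb0sq hPb01 hPb10 hPb1sq
  have hQnorm : ‖Pb₀ + Pb₁‖ ≤ 1 := by
    have h2 := Matrix.l2_opNorm_conjTranspose_mul_self (Pb₀ + Pb₁)
    rw [hQh, hQQ] at h2
    by_cases h0 : ‖Pb₀ + Pb₁‖ = 0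
    · rw [h0]; norm_num
    · have h1 : ‖Pb₀ + Pb₁‖ * ‖Pb₀ + Pb₁‖ = 1 * ‖Pb₀ + Pb₁‖ := by
        rw [one_mul]; exact h2.symm
      rw [mul_right_cancel₀ h0 h1]
  have hnorm : ‖(2 : ℂ)⁻¹ • (Pb₀ + Pb₁)‖ ≤ 1 / 2 := by
    rw [norm_smul]
    have h2 : ‖(2:ℂ)⁻¹‖ = 1/2 := by
      rw [norm_inv]
      norm_num
    rw [h2]
    nlinarith [norm_nonneg (Pb₀ + Pb₁)]
  -- positive semidefiniteness
  have hPb0E : Pb₀ * E = 0 := by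
    rw [hPb₀, sub_mul, h0E, hEE, sub_self]
  have hPb1E : Pb₁ * E = 0 := by
    rw [hPb₁, sub_mul, h1E, hEE, sub_self]
  have hEPb0 : E * Pb₀ = 0 := by
    rw [hPb₀, mul_sub, hE0, hEE, sub_self]
  have hEPb1 : E * Pb₁ = 0 := by
    rw [hPb₁, mul_sub, hE1, hEE, sub_self]
  have hQE : (Pb₀ + Pb₁) * E = 0 := by
    rw [add_mul, hPb0E, hPb1E, add_zero]
  have hEQ : E * (Pb₀ + Pb₁) = 0 := by
    rw [mul_add, hEPb0, hEPb1, add_zero]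
  have hTh : (Pb₀ + Pb₁ + E).IsHermitian := hQh.add hEh
  have hTT : (Pb₀ + Pb₁ + E) * (Pb₀ + Pb₁ + E) = Pb₀ + Pb₁ + E :=
    proj_add _ _ hQQ hQE hEQ hEE
  have hRh : ((1 : Matrix (Fin d × ι) (Fin d × ι) ℂ) - (Pb₀ + Pb₁ + E)).IsHermitian :=
    Matrix.isHermitian_one.sub hTh
  have hRR : ((1 : Matrix (Fin d × ι) (Fin d × ι) ℂ) - (Pb₀ + Pb₁ + E))
      * ((1 : Matrix (Fin d × ι) (Fin d × ι) ℂ) - (Pb₀ + Pb₁ + E))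
      = (1 : Matrix (Fin d × ι) (Fin d × ι) ℂ) - (Pb₀ + Pb₁ + E) := by
    rw [mul_sub, sub_mul, sub_mul, hTT]
    simp only [one_mul, mul_one]
    abel
  have hRpsd : ((1 : Matrix (Fin d × ι) (Fin d × ι) ℂ) - (Pb₀ + Pb₁ + E)).PosSemidef := by
    have h := Matrix.posSemidef_conjTranspose_mul_self
      ((1 : Matrix (Fin d × ι) (Fin d × ι) ℂ) - (Pb₀ + Pb₁ + E))
    rwa [hRh.eq, hRR] at h
  have hmat : (2 : ℂ)⁻¹ • (E + 1) - (2 : ℂ)⁻¹ • (P₀ + P₁)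
      = (2 : ℂ)⁻¹ • ((1 : Matrix (Fin d × ι) (Fin d × ι) ℂ) - (Pb₀ + Pb₁ + E)) := by
    rw [← smul_sub]
    congr 1
    rw [hPb₀, hPb₁]
    abel
  have h2nonneg : (0:ℂ) ≤ (2:ℂ)⁻¹ := by
    rw [show ((2:ℂ))⁻¹ = (((2:ℝ)⁻¹ : ℝ) : ℂ) by norm_num]
    rw [Complex.zero_le_real]
    norm_num
  have hfinal : ((2 : ℂ)⁻¹ • (E + 1) - (2 : ℂ)⁻¹ • (P₀ + P₁)).PosSemidef := by
    rw [hmat]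
    constructor
    · show ((2:ℂ)⁻¹ • _)ᴴ = _
      rw [conjTranspose_smul, hRh.eq]
      norm_num
    · intro x
      exact (hRpsd.smul h2nonneg).2 x
  exact ⟨hPb0sq, hPb0h, hPb1sq, hPb1h, hPb01, hnorm, hfinal⟩
end

section
/- Let |Ψ⟩ be an n-qudit pure state (n ≥ 2) and Ω_SD the verification operator of the SD protocol with uniform probability 2^{1−n} over all 2^{n−1} tests. Then Ω_SD ≤ (1 − 2^{1−n})·1 + 2^{1−n}|Ψ⟩⟨Ψ|, i.e., the spectral gap satisfies ν(Ω_SD) ≥ 2^{1−n}. -/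
open scoped ComplexOrder Classical
open Matrix

/-- The outer product `|v⟩⟨v|`. -/
noncomputable def ketbra {α : Type*} (v : α → ℂ) : Matrix α α ℂ := Matrix.vecMulVec v (star v)

/-- Tensor product of a one-qudit operator with an `n`-qudit operator, giving an
`(n+1)`-qudit operator. -/
def tensM {d n : ℕ} (M : Matrix (Fin d) (Fin d) ℂ)
    (N : Matrix (Fin n → Fin d) (Fin n → Fin d) ℂ) :
    Matrix (Fin (n + 1) → Fin d) (Fin (n + 1) → Fin d) ℂ :=
  fun f g => M (f 0) (g 0) * N (fun k => f k.succ) (fun k => g k.succ)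

/-- The Fourier basis associated with a basis `a` of `ℂ^d`. -/
noncomputable def fourierB (d : ℕ) (a : Fin d → Fin d → ℂ) (i : Fin d) : Fin d → ℂ :=
  ((Real.sqrt d : ℂ))⁻¹ •
    ∑ j : Fin d, Complex.exp (2 * Real.pi * Complex.I / d) ^ ((i : ℕ) * (j : ℕ)) • a j

/-- `IsSDOp d n Ψ Ω` says that `Ω` is the verification operator of the SD protocol with
uniform probability for the `n`-qudit state `Ψ`: recursively, the first party measures in
the Schmidt basis of the cut `1|2…n` or its Fourier basis, each with probability `1/2`,
and the SD protocol is applied to the conditional reduced states; the last party projects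
onto its conditional reduced state. -/
inductive IsSDOp (d : ℕ) : (n : ℕ) → ((Fin n → Fin d) → ℂ) →
    Matrix (Fin n → Fin d) (Fin n → Fin d) ℂ → Prop
  | base (ψ : (Fin 1 → Fin d) → ℂ) : IsSDOp d 1 ψ (ketbra ψ)
  | step {n : ℕ} (s : Fin d → ℝ) (a : Fin d → Fin d → ℂ)
      (B Bt : Fin d → (Fin n → Fin d) → ℂ)
      (Ω Ωt : Fin d → Matrix (Fin n → Fin d) (Fin n → Fin d) ℂ)
      (Ψ : (Fin (n + 1) → Fin d) → ℂ)
      (hs0 : ∀ i, 0 ≤ s i) (hs1 : ∑ i, s i ^ 2 = 1)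
      (haON : ∀ i j, dotProduct (star (a i)) (a j) = if i = j then 1 else 0)
      (hBON : ∀ i j, dotProduct (star (B i)) (B j) = if i = j then 1 else 0)
      (hΨ : Ψ = fun f => ∑ i : Fin d, (s i : ℂ) * a i (f 0) * B i (fun k => f k.succ))
      (hBt : ∀ i, Bt i = fun y => ∑ j : Fin d,
        (star (Complex.exp (2 * Real.pi * Complex.I / d))) ^ ((i : ℕ) * (j : ℕ)) *
          (s j : ℂ) * B j y)
      (hrec : ∀ i, 0 < s i → IsSDOp d n (B i) (Ω i))
      (hrect : ∀ i, IsSDOp d n (Bt i) (Ωt i)) :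
      IsSDOp d (n + 1) Ψ
        ((2 : ℂ)⁻¹ • (∑ i ∈ Finset.univ.filter (fun i => 0 < s i),
            tensM (ketbra (a i)) (Ω i)) +
         (2 : ℂ)⁻¹ • ∑ i : Fin d, tensM (ketbra (fourierB d a i)) (Ωt i))

set_option linter.unusedSectionVars false

namespace SDAux

/-! ### Scalar lemmas about the `d`-th root of unity -/

noncomputable def ww (d : ℕ) : ℂ := Complex.exp (2 * Real.pi * Complex.I / d)

lemma ww_mul_star (d : ℕ) : ww d * star (ww d) = 1 := by
  have h : ‖ww d‖ = 1 := by
    simp [ww, Complex.norm_exp]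
  rw [show (star (ww d)) = (starRingEnd ℂ) (ww d) from rfl, Complex.mul_conj,
    Complex.normSq_eq_norm_sq, h]
  norm_num

lemma star_ww (d : ℕ) : star (ww d) = (ww d)⁻¹ :=
  eq_inv_of_mul_eq_one_left (by rw [mul_comm]; exact ww_mul_star d)

lemma rootSum {d : ℕ} (hd : 0 < d) (p q : Fin d) :
    ∑ k : Fin d, (ww d) ^ ((p : ℕ) * (k : ℕ)) * (star (ww d)) ^ ((q : ℕ) * (k : ℕ))
      = if p = q then (d : ℂ) else 0 := by
  have hprim : IsPrimitiveRoot (ww d) d := Complex.isPrimitiveRoot_exp d hd.ne'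
  set ζ : ℂ := (ww d) ^ (p : ℕ) * (star (ww d)) ^ (q : ℕ) with hζ
  have hterm : ∀ k : Fin d, (ww d) ^ ((p : ℕ) * (k : ℕ)) * (star (ww d)) ^ ((q : ℕ) * (k : ℕ))
      = ζ ^ (k : ℕ) := by
    intro k
    rw [hζ, mul_pow, ← pow_mul, ← pow_mul]
  rw [Finset.sum_congr rfl fun k _ => hterm k]
  rw [Fin.sum_univ_eq_sum_range (fun k => ζ ^ k) d]
  by_cases hpq : p = q
  · subst hpq
    have : ζ = 1 := by rw [hζ, ← mul_pow, ww_mul_star, one_pow]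
    simp [this]
  · rw [if_neg hpq]
    have hζd : ζ ^ d = 1 := by
      rw [hζ, mul_pow, ← pow_mul, ← pow_mul, mul_comm (p:ℕ) d, mul_comm (q:ℕ) d,
        pow_mul, pow_mul, hprim.pow_eq_one, ← star_pow, hprim.pow_eq_one]
      simp
    have hζ1 : ζ ≠ 1 := by
      intro h1
      apply hpq
      have hq : (ww d) ^ (q : ℕ) ≠ 0 := pow_ne_zero _ (Complex.exp_ne_zero _)
      have : (ww d) ^ (p : ℕ) = (ww d) ^ (q : ℕ) := by
        have h2 := congrArg (· * (ww d) ^ (q : ℕ)) h1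
        simp only [hζ, star_ww, inv_pow, one_mul, mul_assoc] at h2
        rwa [inv_mul_cancel₀ hq, mul_one] at h2
      exact Fin.ext (hprim.pow_inj p.isLt q.isLt this)
    rw [geom_sum_eq hζ1, hζd]
    simp

lemma pow_mul_star_pow {d : ℕ} (m : ℕ) : (ww d) ^ m * (star (ww d)) ^ m = 1 := by
  rw [← mul_pow, ww_mul_star, one_pow]

lemma star_sqrtd {d : ℕ} : star ((Real.sqrt d : ℂ))⁻¹ = ((Real.sqrt d : ℂ))⁻¹ := by
  rw [star_inv₀, Complex.star_def, Complex.conj_ofReal]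

lemma sqrtd_mul_sqrtd {d : ℕ} :
    ((Real.sqrt d : ℂ))⁻¹ * ((Real.sqrt d : ℂ))⁻¹ = ((d : ℂ))⁻¹ := by
  rw [← mul_inv]
  congr 1
  rw [← Complex.ofReal_mul, Real.mul_self_sqrt (Nat.cast_nonneg d)]
  norm_num

lemma sqrtd_ne_zero {d : ℕ} (hd : 0 < d) : ((Real.sqrt d : ℂ)) ≠ 0 := by
  simp only [ne_eq, Complex.ofReal_eq_zero]
  positivity

lemma sqrtd_mul_d {d : ℕ} (hd : 0 < d) :
    ((Real.sqrt d : ℂ))⁻¹ * (d : ℂ) = (Real.sqrt d : ℂ) := by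
  have h1 : (d : ℂ) = (Real.sqrt d : ℂ) * (Real.sqrt d : ℂ) := by
    rw [← Complex.ofReal_mul, Real.mul_self_sqrt (Nat.cast_nonneg d)]; norm_num
  rw [h1, ← mul_assoc, inv_mul_cancel₀ (sqrtd_ne_zero hd), one_mul]

/-! ### Generalities on `ketbra` and positive semidefiniteness -/

section psd
variable {α ι : Type*} [Fintype α] [DecidableEq α] [Fintype ι] [DecidableEq ι]

lemma ketbra_apply (v : α → ℂ) (i j : α) : ketbra v i j = v i * star (v j) := rfl

lemma ketbra_isHermitian (v : α → ℂ) : (ketbra v).IsHermitian := by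
  ext i j
  simp [conjTranspose_apply, ketbra_apply, mul_comm]

lemma psd_smul {M : Matrix α α ℂ} (hM : M.PosSemidef) {c : ℂ} (hc : 0 ≤ c) :
    (c • M).PosSemidef := by
  have hcs : star c = c := by
    rw [Complex.star_def, Complex.conj_eq_iff_im]
    exact ((Complex.nonneg_iff).mp hc).2.symm
  refine PosSemidef.of_dotProduct_mulVec_nonneg ?_ (fun x => ?_)
  · rw [IsHermitian, conjTranspose_smul, hcs, hM.1.eq]
  · rw [smul_mulVec, dotProduct_smul, smul_eq_mul]
    exact mul_nonneg hc (hM.dotProduct_mulVec_nonneg x)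

lemma psd_add {M N : Matrix α α ℂ} (hM : M.PosSemidef) (hN : N.PosSemidef) :
    (M + N).PosSemidef := by
  refine PosSemidef.of_dotProduct_mulVec_nonneg (hM.1.add hN.1) (fun x => ?_)
  rw [add_mulVec, dotProduct_add]
  exact add_nonneg (hM.dotProduct_mulVec_nonneg x) (hN.dotProduct_mulVec_nonneg x)

lemma psd_sum (s : Finset ι) (f : ι → Matrix α α ℂ) (h : ∀ i ∈ s, (f i).PosSemidef) :
    (∑ i ∈ s, f i).PosSemidef := by
  classical
  induction s using Finset.induction_on with
  | empty => simpa using Matrix.PosSemidef.zero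
  | insert _ _ hx ih =>
    rw [Finset.sum_insert hx]
    exact psd_add (h _ (Finset.mem_insert_self _ _))
      (ih fun i hi => h i (Finset.mem_insert_of_mem hi))

lemma ketbra_posSemidef (v : α → ℂ) : (ketbra v).PosSemidef := by
  refine PosSemidef.of_dotProduct_mulVec_nonneg (ketbra_isHermitian v) (fun x => ?_)
  have : star x ⬝ᵥ (ketbra v *ᵥ x) = star (star v ⬝ᵥ x) * (star v ⬝ᵥ x) := by
    simp only [dotProduct, mulVec, ketbra_apply, Pi.star_apply, Finset.mul_sum,
      Finset.sum_mul, star_sum, star_mul', star_star]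
    rw [Finset.sum_comm]
    exact Finset.sum_congr rfl fun i _ => Finset.sum_congr rfl fun j _ => by ring
  rw [this]
  exact star_mul_self_nonneg _

lemma ketbra_mul_ketbra (v w : α → ℂ) :
    ketbra v * ketbra w = (star v ⬝ᵥ w) • Matrix.vecMulVec v (star w) := by
  ext i j
  simp only [mul_apply, ketbra_apply, Matrix.smul_apply, vecMulVec_apply, dotProduct,
    Finset.sum_mul, smul_eq_mul, Pi.star_apply]
  exact Finset.sum_congr rfl fun k _ => by ring

lemma sum_ketbra_idem (s : Finset ι) (u : ι → α → ℂ)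
    (h : ∀ i ∈ s, ∀ j ∈ s, star (u i) ⬝ᵥ u j = if i = j then 1 else 0) :
    (∑ i ∈ s, ketbra (u i)) * (∑ i ∈ s, ketbra (u i)) = ∑ i ∈ s, ketbra (u i) := by
  rw [Finset.sum_mul_sum]
  rw [Finset.sum_congr rfl (fun i hi => Finset.sum_congr rfl
    (fun j hj => by rw [ketbra_mul_ketbra, h i hi j hj]))]
  rw [Finset.sum_congr rfl (fun i hi => Finset.sum_eq_single i
    (fun j _ hji => by rw [if_neg fun hh => hji hh.symm, zero_smul])
    (fun hni => absurd hi hni))]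
  exact Finset.sum_congr rfl fun i _ => by rw [if_pos rfl, one_smul]; rfl

lemma sum_ketbra_isHermitian (s : Finset ι) (u : ι → α → ℂ) :
    (∑ i ∈ s, ketbra (u i)).IsHermitian := by
  rw [IsHermitian, conjTranspose_sum]
  exact Finset.sum_congr rfl fun i _ => (ketbra_isHermitian (u i)).eq

lemma psd_one_add_sub (P Q R : Matrix α α ℂ)
    (hP : P.IsHermitian) (hQ : Q.IsHermitian) (hP2 : P * P = P) (hQ2 : Q * Q = Q)
    (hPQ : P * Q = R) (hQP : Q * P = R) : (1 + R - P - Q).PosSemidef := by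
  have h1Q : (1 - Q).PosSemidef := by
    have hh : (1 - Q)ᴴ = 1 - Q := by rw [conjTranspose_sub, conjTranspose_one, hQ.eq]
    have : (1 - Q)ᴴ * (1 - Q) = 1 - Q := by
      rw [hh, sub_mul, one_mul, mul_sub, mul_one, hQ2]; abel
    rw [← this]
    exact Matrix.posSemidef_conjTranspose_mul_self _
  have hPR : P * R = R := by rw [← hQP, ← mul_assoc, hPQ, ← hQP, mul_assoc, hP2]
  have key : (1 - P) * (1 - Q) * (1 - P)ᴴ = 1 + R - P - Q := by
    rw [conjTranspose_sub, conjTranspose_one, hP.eq]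
    have expand : (1 - P) * (1 - Q) * (1 - P)
        = 1 - P - Q + Q * P + P * Q + P * P - P - P * (Q * P) := by noncomm_ring
    rw [expand, hQP, hPQ, hPR, hP2]; abel
  rw [← key]
  exact h1Q.mul_mul_conjTranspose_same _

end psd

/-! ### Tensor-product vectors and operators -/

section tens
variable {d n : ℕ}

def tensV (a : Fin d → ℂ) (B : (Fin n → Fin d) → ℂ) : (Fin (n + 1) → Fin d) → ℂ :=
  fun f => a (f 0) * B (fun k => f k.succ)

lemma sum_split (γ : (Fin (n + 1) → Fin d) → ℂ) :
    ∑ f, γ f = ∑ j : Fin d, ∑ h : Fin n → Fin d, γ (Fin.cons j h) := by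
  rw [← Equiv.sum_comp (Fin.consEquiv (fun _ : Fin (n + 1) => Fin d)) γ,
    Fintype.sum_prod_type]
  rfl

lemma fun_eq_iff (f g : Fin (n + 1) → Fin d) :
    f = g ↔ (f 0 = g 0 ∧ (fun k => f (Fin.succ k)) = fun k => g (Fin.succ k)) := by
  constructor
  · rintro rfl; exact ⟨rfl, rfl⟩
  · rintro ⟨h0, hs⟩
    funext i
    induction i using Fin.cases with
    | zero => exact h0
    | succ k => exact congrFun hs k

lemma tensV_dot (a a' : Fin d → ℂ) (B B' : (Fin n → Fin d) → ℂ) :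
    star (tensV a B) ⬝ᵥ tensV a' B' = (star a ⬝ᵥ a') * (star B ⬝ᵥ B') := by
  simp only [dotProduct, Finset.sum_mul_sum]
  rw [sum_split (fun f => star (tensV a B) f * tensV a' B' f)]
  refine Finset.sum_congr rfl fun j _ => Finset.sum_congr rfl fun h _ => ?_
  simp only [tensV, Pi.star_apply, Fin.cons_zero, star_mul']
  have hc : (fun k => Fin.cons (α := fun _ : Fin (n + 1) => Fin d) j h (Fin.succ k)) = h := by
    funext k; simp
  rw [hc]
  ring

lemma tensM_ketbra_ketbra (a : Fin d → ℂ) (B : (Fin n → Fin d) → ℂ) :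
    tensM (ketbra a) (ketbra B) = ketbra (tensV a B) := by
  ext f g
  simp only [tensM, ketbra_apply, tensV, Pi.star_apply, star_mul']
  ring

lemma tensM_add (M : Matrix (Fin d) (Fin d) ℂ) (N N' : Matrix (Fin n → Fin d) (Fin n → Fin d) ℂ) :
    tensM M (N + N') = tensM M N + tensM M N' := by
  ext f g; simp [tensM, mul_add]

lemma tensM_sub (M : Matrix (Fin d) (Fin d) ℂ) (N N' : Matrix (Fin n → Fin d) (Fin n → Fin d) ℂ) :
    tensM M (N - N') = tensM M N - tensM M N' := by
  ext f g; simp [tensM, mul_sub]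

lemma tensM_smul (M : Matrix (Fin d) (Fin d) ℂ) (c : ℂ)
    (N : Matrix (Fin n → Fin d) (Fin n → Fin d) ℂ) :
    tensM M (c • N) = c • tensM M N := by
  ext f g; simp [tensM]; ring

lemma tensM_posSemidef (a : Fin d → ℂ) {N : Matrix (Fin n → Fin d) (Fin n → Fin d) ℂ}
    (hN : N.PosSemidef) : (tensM (ketbra a) N).PosSemidef := by
  classical
  set E : Matrix (Fin n → Fin d) (Fin (n + 1) → Fin d) ℂ :=
    Matrix.of (fun h g => if (fun k => g (Fin.succ k)) = h then star (a (g 0)) else 0) with hE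
  have key : tensM (ketbra a) N = Eᴴ * N * E := by
    ext f g
    simp only [tensM, ketbra_apply, Matrix.mul_apply, conjTranspose_apply, hE, Matrix.of_apply,
      Pi.star_apply]
    rw [Finset.sum_eq_single (fun k => g (Fin.succ k)) ?_ ?_]
    · rw [Finset.sum_eq_single (fun k => f (Fin.succ k)) ?_ ?_]
      · rw [if_pos rfl, if_pos rfl, star_star]; ring
      · intro y _ hne
        rw [if_neg (fun hh => hne hh.symm), star_zero, zero_mul]
      · intro hni; exact absurd (Finset.mem_univ _) hni
    · intro x _ hne
      rw [if_neg (fun hh => hne hh.symm), mul_zero]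
    · intro hni; exact absurd (Finset.mem_univ _) hni
  rw [key]
  exact hN.conjTranspose_mul_mul_same E

lemma sum_ketbra_eq_one {a : Fin d → Fin d → ℂ}
    (h : ∀ i j, star (a i) ⬝ᵥ a j = if i = j then 1 else 0) :
    ∑ i, ketbra (a i) = (1 : Matrix (Fin d) (Fin d) ℂ) := by
  classical
  set A : Matrix (Fin d) (Fin d) ℂ := Matrix.of (fun i j => star (a i j)) with hA
  have h1 : A * Aᴴ = 1 := by
    ext i j
    simp only [Matrix.mul_apply, conjTranspose_apply, hA, Matrix.of_apply, star_star,
      Matrix.one_apply]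
    rw [← h i j]
    rfl
  have h2 : Aᴴ * A = 1 := mul_eq_one_comm.mp h1
  ext x y
  rw [Matrix.sum_apply]
  have := congrFun (congrFun h2 x) y
  simp only [Matrix.mul_apply, conjTranspose_apply, hA, Matrix.of_apply, star_star] at this
  rw [← this]
  exact Finset.sum_congr rfl fun i _ => rfl

lemma sum_tensM_one {a : Fin d → Fin d → ℂ}
    (h : ∀ i j, star (a i) ⬝ᵥ a j = if i = j then 1 else 0) :
    ∑ i, tensM (ketbra (a i)) (1 : Matrix (Fin n → Fin d) (Fin n → Fin d) ℂ) = 1 := by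
  ext f g
  rw [Matrix.sum_apply]
  have h1 : ∀ i, tensM (ketbra (a i)) (1 : Matrix (Fin n → Fin d) (Fin n → Fin d) ℂ) f g
      = ketbra (a i) (f 0) (g 0) * (1 : Matrix (Fin n → Fin d) (Fin n → Fin d) ℂ)
          (fun k => f k.succ) (fun k => g k.succ) := fun i => rfl
  simp only [h1, ← Finset.sum_mul, ← Matrix.sum_apply, sum_ketbra_eq_one h]
  by_cases h0 : f 0 = g 0
  · by_cases ht : (fun k => f (Fin.succ k)) = (fun k => g (Fin.succ k))
    · have hfg : f = g := (fun_eq_iff f g).mpr ⟨h0, ht⟩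
      subst hfg; simp [Matrix.one_apply]
    · have hfg : f ≠ g := fun hh => ht ((fun_eq_iff f g).mp hh).2
      simp [Matrix.one_apply, ht, hfg]
  · have hfg : f ≠ g := fun hh => h0 ((fun_eq_iff f g).mp hh).1
    simp [Matrix.one_apply, h0, hfg]

end tens

/-! ### Dot-product expansions -/

section dots
variable {d : ℕ} {α : Type*} [Fintype α]

lemma dot_expand_right (v : α → ℂ) (x : Fin d → ℂ) (u : Fin d → α → ℂ) :
    v ⬝ᵥ (∑ k, x k • u k) = ∑ k, x k * (v ⬝ᵥ u k) := by
  simp only [dotProduct, Finset.sum_apply, Pi.smul_apply, smul_eq_mul, Finset.mul_sum]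
  rw [Finset.sum_comm]
  exact Finset.sum_congr rfl fun k _ => Finset.sum_congr rfl fun y _ => by ring

lemma dot_expand_left0 (x : Fin d → ℂ) (u : Fin d → α → ℂ) (w : α → ℂ) :
    star (∑ k, x k • u k) ⬝ᵥ w = ∑ k, star (x k) * (star (u k) ⬝ᵥ w) := by
  simp only [dotProduct, Pi.star_apply, Pi.smul_apply, Finset.sum_apply, smul_eq_mul,
    star_mul', star_sum, Finset.sum_mul, Finset.mul_sum]
  rw [Finset.sum_comm]
  exact Finset.sum_congr rfl fun k _ => Finset.sum_congr rfl fun y _ => by ring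

lemma dot_expand_left (cst : ℂ) (x : Fin d → ℂ) (u : Fin d → α → ℂ) (w : α → ℂ) :
    star (cst • ∑ k, x k • u k) ⬝ᵥ w
      = star cst * ∑ k, star (x k) * (star (u k) ⬝ᵥ w) := by
  rw [star_smul, smul_dotProduct, smul_eq_mul, dot_expand_left0]

end dots

/-! ### The protocol-specific overlap computations -/

section protocol
variable {d n : ℕ} {s : Fin d → ℝ} {a : Fin d → Fin d → ℂ}
  {B Bt : Fin d → (Fin n → Fin d) → ℂ} {Ψ : (Fin (n + 1) → Fin d) → ℂ}
  (haON : ∀ i j, dotProduct (star (a i)) (a j) = if i = j then 1 else 0)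
  (hBON : ∀ i j, dotProduct (star (B i)) (B j) = if i = j then 1 else 0)
  (hΨ : Ψ = fun f => ∑ i : Fin d, (s i : ℂ) * a i (f 0) * B i (fun k => f k.succ))
  (hBt : ∀ i, Bt i = fun y => ∑ j : Fin d,
      (star (Complex.exp (2 * Real.pi * Complex.I / d))) ^ ((i : ℕ) * (j : ℕ)) *
        (s j : ℂ) * B j y)

lemma fourier_eq (i : Fin d) :
    fourierB d a i = ((Real.sqrt d : ℂ))⁻¹ • ∑ j : Fin d, (ww d) ^ ((i : ℕ) * (j : ℕ)) • a j :=
  rfl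

include hBt in
lemma Bt_eq (i : Fin d) :
    Bt i = ∑ j : Fin d, ((star (ww d)) ^ ((i : ℕ) * (j : ℕ)) * (s j : ℂ)) • B j := by
  rw [hBt i]
  funext y
  simp only [Finset.sum_apply, Pi.smul_apply, smul_eq_mul, ww]

include haON in
lemma a_dot_fourier (i j : Fin d) :
    star (a i) ⬝ᵥ fourierB d a j
      = ((Real.sqrt d : ℂ))⁻¹ * (ww d) ^ ((j : ℕ) * (i : ℕ)) := by
  rw [fourier_eq, dotProduct_smul, dot_expand_right, smul_eq_mul]
  congr 1
  rw [Finset.sum_congr rfl (fun k _ => by rw [haON i k])]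
  rw [Finset.sum_eq_single i (fun k _ hki => by rw [if_neg (fun hh => hki hh.symm), mul_zero])
    (fun hni => absurd (Finset.mem_univ _) hni)]
  rw [if_pos rfl, mul_one]

include haON in
lemma fourier_ON (hd : 0 < d) (i j : Fin d) :
    star (fourierB d a i) ⬝ᵥ fourierB d a j = if i = j then 1 else 0 := by
  rw [fourier_eq (a := a) i, dot_expand_left, star_sqrtd]
  have h1 : ∀ k : Fin d, star ((ww d) ^ ((i : ℕ) * (k : ℕ))) * (star (a k) ⬝ᵥ fourierB d a j)
      = ((Real.sqrt d : ℂ))⁻¹ *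
          ((ww d) ^ ((j : ℕ) * (k : ℕ)) * (star (ww d)) ^ ((i : ℕ) * (k : ℕ))) := by
    intro k
    rw [a_dot_fourier haON k j, star_pow]
    ring
  rw [Finset.sum_congr rfl fun k _ => h1 k, ← Finset.mul_sum, ← mul_assoc, sqrtd_mul_sqrtd,
    rootSum hd j i]
  have hd0 : (d : ℂ) ≠ 0 := by
    simp only [ne_eq, Nat.cast_eq_zero]; omega
  by_cases hij : i = j
  · rw [if_pos hij.symm, if_pos hij, inv_mul_cancel₀ hd0]
  · rw [if_neg (fun hh => hij hh.symm), if_neg hij, mul_zero]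

include hBON hBt in
lemma B_dot_Bt (i j : Fin d) :
    star (B i) ⬝ᵥ Bt j = (star (ww d)) ^ ((j : ℕ) * (i : ℕ)) * (s i : ℂ) := by
  rw [Bt_eq hBt j, dot_expand_right]
  rw [Finset.sum_congr rfl (fun k _ => by rw [hBON i k])]
  rw [Finset.sum_eq_single i (fun k _ hki => by rw [if_neg (fun hh => hki hh.symm), mul_zero])
    (fun hni => absurd (Finset.mem_univ _) hni)]
  rw [if_pos rfl, mul_one]

include hBON hBt in
lemma Bt_unit (hs1 : ∑ i, s i ^ 2 = 1) (i : Fin d) : star (Bt i) ⬝ᵥ Bt i = 1 := by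
  rw [Bt_eq hBt i, dot_expand_left0]
  have h1 : ∀ k : Fin d, star ((star (ww d)) ^ ((i : ℕ) * (k : ℕ)) * (s k : ℂ)) *
      (star (B k) ⬝ᵥ ∑ l : Fin d, ((star (ww d)) ^ ((i : ℕ) * (l : ℕ)) * (s l : ℂ)) • B l)
      = ((s k : ℂ)) ^ 2 := by
    intro k
    rw [dot_expand_right, Finset.sum_congr rfl (fun l _ => by rw [hBON k l]),
      Finset.sum_eq_single k (fun l _ hlk => by rw [if_neg (fun hh => hlk hh.symm), mul_zero])
        (fun hni => absurd (Finset.mem_univ _) hni),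
      if_pos rfl, mul_one, star_mul', star_pow, star_star, Complex.star_def,
      Complex.conj_ofReal]
    calc (ww d) ^ ((i : ℕ) * (k : ℕ)) * (s k : ℂ)
          * ((star (ww d)) ^ ((i : ℕ) * (k : ℕ)) * (s k : ℂ))
        = ((ww d) ^ ((i : ℕ) * (k : ℕ)) * (star (ww d)) ^ ((i : ℕ) * (k : ℕ)))
            * ((s k : ℂ) * (s k : ℂ)) := by ring
      _ = ((s k : ℂ)) ^ 2 := by rw [pow_mul_star_pow]; ring
  rw [Finset.sum_congr rfl fun k _ => h1 k]
  have h2 : ∑ k, ((s k : ℂ)) ^ 2 = ((∑ k, (s k) ^ 2 : ℝ) : ℂ) := by push_cast; ring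
  rw [h2, hs1]
  norm_num

include hΨ in
lemma Psi_eq_sum_filter (hs0 : ∀ i, 0 ≤ s i) (x : Fin (n + 1) → Fin d) :
    Ψ x = ∑ i ∈ Finset.univ.filter (fun i => 0 < s i), (s i : ℂ) * tensV (a i) (B i) x := by
  rw [hΨ]
  rw [Finset.sum_filter_of_ne (fun i _ hne => ?_)]
  · exact Finset.sum_congr rfl fun i _ => by rw [tensV]; ring
  · by_contra hns
    have : s i = 0 := le_antisymm (not_lt.mp hns) (hs0 i)
    apply hne
    rw [show ((s i : ℂ)) = 0 from by rw [this]; norm_num]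
    ring

include haON hBt hΨ in
lemma sum_v_eq (hd : 0 < d) (y : Fin (n + 1) → Fin d) :
    ∑ j, tensV (fourierB d a j) (Bt j) y = (Real.sqrt d : ℂ) * Ψ y := by
  have step : ∀ j : Fin d, tensV (fourierB d a j) (Bt j) y
      = ((Real.sqrt d : ℂ))⁻¹ * ∑ k : Fin d, ∑ l : Fin d,
          (ww d) ^ ((k : ℕ) * (j : ℕ)) * (star (ww d)) ^ ((l : ℕ) * (j : ℕ))
            * (a k (y 0) * ((s l : ℂ) * B l (fun m => y m.succ))) := by
    intro j
    have hf : fourierB d a j (y 0)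
        = ((Real.sqrt d : ℂ))⁻¹ * ∑ k : Fin d, (ww d) ^ ((j : ℕ) * (k : ℕ)) * a k (y 0) := by
      rw [fourier_eq]
      simp only [Pi.smul_apply, Finset.sum_apply, smul_eq_mul]
    have hb : Bt j (fun m => y m.succ)
        = ∑ l : Fin d, (star (ww d)) ^ ((j : ℕ) * (l : ℕ)) * (s l : ℂ)
            * B l (fun m => y m.succ) := by
      unfold ww
      exact congrFun (hBt j) _
    rw [tensV, hf, hb, mul_assoc, Finset.sum_mul_sum]
    congr 1
    refine Finset.sum_congr rfl fun k _ => Finset.sum_congr rfl fun l _ => ?_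
    rw [Nat.mul_comm (j : ℕ) (k : ℕ), Nat.mul_comm (j : ℕ) (l : ℕ)]
    ring
  rw [Finset.sum_congr rfl fun j _ => step j, ← Finset.mul_sum]
  rw [Finset.sum_comm]
  rw [Finset.sum_congr rfl fun k _ => Finset.sum_comm]
  have inner : ∀ k : Fin d, ∀ l : Fin d, ∑ j : Fin d,
      (ww d) ^ ((k : ℕ) * (j : ℕ)) * (star (ww d)) ^ ((l : ℕ) * (j : ℕ))
        * (a k (y 0) * ((s l : ℂ) * B l (fun m => y m.succ)))
      = (if k = l then (d : ℂ) else 0) * (a k (y 0) * ((s l : ℂ) * B l (fun m => y m.succ))) := by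
    intro k l
    rw [← Finset.sum_mul, rootSum hd k l]
  rw [Finset.sum_congr rfl fun k _ => Finset.sum_congr rfl fun l _ => inner k l]
  rw [Finset.sum_congr rfl fun k _ => Finset.sum_eq_single k
    (fun l _ hlk => by rw [if_neg (fun hh => hlk hh.symm), zero_mul])
    (fun hni => absurd (Finset.mem_univ _) hni)]
  simp only [eq_self_iff_true, if_true]
  simp only [hΨ]
  rw [Finset.mul_sum, Finset.mul_sum]
  refine Finset.sum_congr rfl fun k _ => ?_
  linear_combination (a k (y 0) * ((s k : ℂ) * B k (fun m => y m.succ))) * sqrtd_mul_d (d := d) hd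

end protocol
end SDAux

namespace SDAux2
open SDAux

section pq
variable {d n : ℕ} {s : Fin d → ℝ} {a : Fin d → Fin d → ℂ}
  {B Bt : Fin d → (Fin n → Fin d) → ℂ} {Ψ : (Fin (n + 1) → Fin d) → ℂ}
  (haON : ∀ i j, dotProduct (star (a i)) (a j) = if i = j then 1 else 0)
  (hBON : ∀ i j, dotProduct (star (B i)) (B j) = if i = j then 1 else 0)
  (hΨ : Ψ = fun f => ∑ i : Fin d, (s i : ℂ) * a i (f 0) * B i (fun k => f k.succ))
  (hBt : ∀ i, Bt i = fun y => ∑ j : Fin d,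
      (star (Complex.exp (2 * Real.pi * Complex.I / d))) ^ ((i : ℕ) * (j : ℕ)) *
        (s j : ℂ) * B j y)

include haON hBON in
lemma u_ON (i j : Fin d) :
    star (tensV (a i) (B i)) ⬝ᵥ tensV (a j) (B j) = if i = j then 1 else 0 := by
  rw [tensV_dot, haON, hBON]
  by_cases h : i = j <;> simp [h]

include haON hBON hBt in
lemma v_ON (hd : 0 < d) (hs1 : ∑ i, s i ^ 2 = 1) (i j : Fin d) :
    star (tensV (fourierB d a i) (Bt i)) ⬝ᵥ tensV (fourierB d a j) (Bt j)
      = if i = j then 1 else 0 := by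
  rw [tensV_dot, fourier_ON haON hd i j]
  by_cases h : i = j
  · subst h
    simp [Bt_unit hBON hBt hs1 i]
  · simp [h]

include haON hBON hΨ hBt in
lemma PQ_eq (hd : 0 < d) (hs0 : ∀ i, 0 ≤ s i) :
    (∑ i ∈ Finset.univ.filter (fun i => 0 < s i), ketbra (tensV (a i) (B i))) *
      (∑ j, ketbra (tensV (fourierB d a j) (Bt j))) = ketbra Ψ := by
  rw [Finset.sum_mul_sum]
  have hover : ∀ i : Fin d, ∀ j : Fin d,
      ketbra (tensV (a i) (B i)) * ketbra (tensV (fourierB d a j) (Bt j))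
      = (((Real.sqrt d : ℂ))⁻¹ * (s i : ℂ)) •
          Matrix.vecMulVec (tensV (a i) (B i)) (star (tensV (fourierB d a j) (Bt j))) := by
    intro i j
    rw [ketbra_mul_ketbra, tensV_dot, a_dot_fourier haON i j, B_dot_Bt hBON hBt i j]
    congr 1
    calc ((Real.sqrt d : ℂ))⁻¹ * (ww d) ^ ((j : ℕ) * (i : ℕ))
          * ((star (ww d)) ^ ((j : ℕ) * (i : ℕ)) * (s i : ℂ))
        = ((Real.sqrt d : ℂ))⁻¹ * (s i : ℂ)
            * ((ww d) ^ ((j : ℕ) * (i : ℕ)) * (star (ww d)) ^ ((j : ℕ) * (i : ℕ))) := by ring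
      _ = ((Real.sqrt d : ℂ))⁻¹ * (s i : ℂ) := by rw [pow_mul_star_pow, mul_one]
  rw [Finset.sum_congr rfl fun i _ => Finset.sum_congr rfl fun j _ => hover i j]
  ext x y
  simp only [Matrix.sum_apply, Matrix.smul_apply, Matrix.vecMulVec_apply, smul_eq_mul,
    Pi.star_apply]
  have h1 : ∑ i ∈ Finset.univ.filter (fun i => 0 < s i), ∑ j : Fin d,
      ((Real.sqrt d : ℂ))⁻¹ * (s i : ℂ)
        * (tensV (a i) (B i) x * star (tensV (fourierB d a j) (Bt j) y))
      = (∑ i ∈ Finset.univ.filter (fun i => 0 < s i), (s i : ℂ) * tensV (a i) (B i) x)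
        * (∑ j, ((Real.sqrt d : ℂ))⁻¹ * star (tensV (fourierB d a j) (Bt j) y)) := by
    rw [Finset.sum_mul_sum]
    exact Finset.sum_congr rfl fun i _ => Finset.sum_congr rfl fun j _ => by ring
  rw [h1, ← Psi_eq_sum_filter hΨ hs0 x]
  have h2 : ∑ j, ((Real.sqrt d : ℂ))⁻¹ * star (tensV (fourierB d a j) (Bt j) y)
      = star (Ψ y) := by
    rw [← Finset.mul_sum, ← star_sum, sum_v_eq haON hΨ hBt hd y, star_mul',
      Complex.star_def, Complex.conj_ofReal, ← mul_assoc,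
      inv_mul_cancel₀ (sqrtd_ne_zero hd), one_mul]
  rw [h2]
  rfl

end pq
end SDAux2

open SDAux SDAux2

lemma key {d : ℕ} (hd : 0 < d) {n : ℕ} {Ψ : (Fin n → Fin d) → ℂ}
    {Ω : Matrix (Fin n → Fin d) (Fin n → Fin d) ℂ} (h : IsSDOp d n Ψ Ω) :
    ((1 - ((2 : ℂ) ^ (n - 1))⁻¹) • (1 : Matrix (Fin n → Fin d) (Fin n → Fin d) ℂ) +
      ((2 : ℂ) ^ (n - 1))⁻¹ • ketbra Ψ - Ω).PosSemidef := by
  induction h with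
  | base ψ =>
      simp only [Nat.sub_self, pow_zero, inv_one, sub_self, zero_smul, one_smul, zero_add,
        sub_self]
      exact Matrix.PosSemidef.zero
  | @step n s a B Bt Ω' Ωt Ψ hs0 hs1 haON hBON hΨ hBt hrec hrect ih iht =>
      cases n with
      | zero => cases hrect ⟨0, hd⟩
      | succ m =>
        simp only [Nat.add_sub_cancel] at ih iht ⊢
        set c : ℂ := ((2 : ℂ) ^ (m + 1))⁻¹ with hc
        have h2c : ((2 : ℂ) ^ m)⁻¹ = 2 * c := by
          rw [hc, pow_succ, mul_inv, ← mul_assoc]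
          rw [mul_comm (2 : ℂ) ((2 : ℂ) ^ m)⁻¹, mul_assoc,
            mul_inv_cancel₀ (two_ne_zero), mul_one]
        simp only [h2c] at ih iht
        set S : Finset (Fin d) := Finset.univ.filter (fun i => 0 < s i) with hS
        have half_nn : (0 : ℂ) ≤ (2 : ℂ)⁻¹ := by
          have he : ((((2 : ℝ))⁻¹ : ℝ) : ℂ) = (2 : ℂ)⁻¹ := by push_cast; ring
          rw [← he]
          exact Complex.zero_le_real.mpr (by norm_num)
        have c_nn : (0 : ℂ) ≤ c := by
          have he : ((((2 : ℝ) ^ (m + 1))⁻¹ : ℝ) : ℂ) = c := by rw [hc]; push_cast; ring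
          rw [← he]
          exact Complex.zero_le_real.mpr (by positivity)
        have one_sub_nn : (0 : ℂ) ≤ 1 - 2 * c := by
          have he : (((1 - ((2 : ℝ) ^ m)⁻¹ : ℝ)) : ℂ) = 1 - 2 * c := by
            rw [← h2c]; push_cast; ring
          rw [← he]
          refine Complex.zero_le_real.mpr ?_
          have h1 : ((2 : ℝ) ^ m)⁻¹ ≤ 1 := by
            rw [← inv_pow]
            exact pow_le_one₀ (by norm_num) (by norm_num)
          linarith
        have hfON := fourier_ON haON hd
        have hA1 : (∑ i, tensM (ketbra (a i))
            (1 : Matrix (Fin (m + 1) → Fin d) (Fin (m + 1) → Fin d) ℂ)) = 1 :=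
          sum_tensM_one haON
        have hF1 : (∑ i, tensM (ketbra (fourierB d a i))
            (1 : Matrix (Fin (m + 1) → Fin d) (Fin (m + 1) → Fin d) ℂ)) = 1 :=
          sum_tensM_one hfON
        have hsplit : (∑ i ∈ Finset.univ.filter (fun i => ¬ 0 < s i), tensM (ketbra (a i))
              (1 : Matrix (Fin (m + 1) → Fin d) (Fin (m + 1) → Fin d) ℂ))
            = 1 - ∑ i ∈ S, tensM (ketbra (a i))
              (1 : Matrix (Fin (m + 1) → Fin d) (Fin (m + 1) → Fin d) ℂ) := by
          have h4 : (∑ i ∈ Finset.univ.filter (fun i => 0 < s i), tensM (ketbra (a i))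
                (1 : Matrix (Fin (m + 1) → Fin d) (Fin (m + 1) → Fin d) ℂ))
              + (∑ i ∈ Finset.univ.filter (fun i => ¬ 0 < s i), tensM (ketbra (a i))
                (1 : Matrix (Fin (m + 1) → Fin d) (Fin (m + 1) → Fin d) ℂ)) = 1 := by
            rw [Finset.sum_filter_add_sum_filter_not]
            exact hA1
          rw [hS, ← h4]
          abel
        set P := ∑ i ∈ S, ketbra (tensV (a i) (B i)) with hP
        set Q := ∑ j, ketbra (tensV (fourierB d a j) (Bt j)) with hQ
        have hPherm := sum_ketbra_isHermitian S (fun i => tensV (a i) (B i))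
        have hQherm := sum_ketbra_isHermitian Finset.univ
          (fun j => tensV (fourierB d a j) (Bt j))
        have hP2 : P * P = P := sum_ketbra_idem S _ (fun i _ j _ => u_ON haON hBON i j)
        have hQ2 : Q * Q = Q := sum_ketbra_idem Finset.univ _
          (fun i _ j _ => v_ON haON hBON hBt hd hs1 i j)
        have hPQ : P * Q = ketbra Ψ := PQ_eq haON hBON hΨ hBt hd hs0
        have hQP : Q * P = ketbra Ψ := by
          have h3 := congrArg Matrix.conjTranspose hPQ
          rwa [Matrix.conjTranspose_mul, hPherm.eq, hQherm.eq,
            (ketbra_isHermitian Ψ).eq] at h3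
        have hS4 : (1 + ketbra Ψ - P - Q).PosSemidef :=
          psd_one_add_sub P Q (ketbra Ψ) hPherm hQherm hP2 hQ2 hPQ hQP
        have hPA : ∑ i ∈ S, tensM (ketbra (a i)) (ketbra (B i)) = P :=
          Finset.sum_congr rfl fun i _ => tensM_ketbra_ketbra _ _
        have hQA : ∑ j, tensM (ketbra (fourierB d a j)) (ketbra (Bt j)) = Q :=
          Finset.sum_congr rfl fun j _ => tensM_ketbra_ketbra _ _
        have hdecomp : (1 - c) • (1 : Matrix (Fin (m + 1 + 1) → Fin d)
              (Fin (m + 1 + 1) → Fin d) ℂ) + c • ketbra Ψ -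
            ((2 : ℂ)⁻¹ • (∑ i ∈ S, tensM (ketbra (a i)) (Ω' i)) +
             (2 : ℂ)⁻¹ • ∑ i, tensM (ketbra (fourierB d a i)) (Ωt i))
          = (2 : ℂ)⁻¹ • (∑ i ∈ S, tensM (ketbra (a i))
                ((1 - 2 * c) • 1 + (2 * c) • ketbra (B i) - Ω' i))
            + (2 : ℂ)⁻¹ • (∑ i, tensM (ketbra (fourierB d a i))
                ((1 - 2 * c) • 1 + (2 * c) • ketbra (Bt i) - Ωt i))
            + ((2 : ℂ)⁻¹ * (1 - 2 * c)) • (∑ i ∈ Finset.univ.filter (fun i => ¬ 0 < s i),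
                tensM (ketbra (a i)) 1)
            + c • (1 + ketbra Ψ - P - Q) := by
          rw [hsplit]
          simp only [tensM_sub, tensM_add, tensM_smul, Finset.sum_sub_distrib,
            Finset.sum_add_distrib, ← Finset.smul_sum]
          rw [hF1, hPA, hQA]
          module
        rw [hdecomp]
        refine psd_add (psd_add (psd_add ?_ ?_) ?_) ?_
        · refine psd_smul (psd_sum _ _ (fun i hi => tensM_posSemidef _ ?_)) half_nn
          have hi' : 0 < s i := by
            rw [hS] at hi
            exact (Finset.mem_filter.mp hi).2
          exact ih i hi'
        · exact psd_smul (psd_sum _ _ (fun i _ => tensM_posSemidef _ (iht i))) half_nn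
        · exact psd_smul (psd_sum _ _ (fun i _ => tensM_posSemidef _ Matrix.PosSemidef.one))
            (mul_nonneg half_nn one_sub_nn)
        · exact psd_smul hS4 c_nn

/-- Theorem 1: the SD protocol with uniform probability for any `n`-qudit pure state
(`n ≥ 2`) satisfies `Ω_SD ≤ (1 − 2^{1−n})·1 + 2^{1−n}|Ψ⟩⟨Ψ|`, i.e. its spectral gap is
at least `2^{1−n}`. -/
theorem stmt9 (d n : ℕ) (hd : 0 < d) (hn : 2 ≤ n)
    (Ψ : (Fin n → Fin d) → ℂ) (hΨunit : dotProduct (star Ψ) Ψ = 1)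
    (Ω : Matrix (Fin n → Fin d) (Fin n → Fin d) ℂ) (hΩ : IsSDOp d n Ψ Ω) :
    ((1 - ((2 : ℂ) ^ (n - 1))⁻¹) • (1 : Matrix (Fin n → Fin d) (Fin n → Fin d) ℂ) +
      ((2 : ℂ) ^ (n - 1))⁻¹ • ketbra Ψ - Ω).PosSemidef := by
  exact key hd hΩ
end
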